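/- arXiv:1702.06266 — 9 statements merged into one kernel-verified Lean document; each statement's English description precedes it below -/
import Mathlib

section
/- Let S be a union-closed set system on a set Ω with infinite breadth. Then there exists a spread ℰ in Ω such that S ⊓ join(ℰ) contains T_max(ℰ), or there exists a spread ℰ in Ω such that S ⊓ join(ℰ) contains T_min(ℰ), or there exists a spread ℰ in Ω such that S ⊓ join(ℰ) contains T_ort(ℰ). -/
open Set Filter
open scoped Classical

variable {Ω : Type*}

/-- A union-closed set system (concrete semilattice) on `Ω`. -/
def UnionClosed (S : Set (Set Ω)) : Prop := ∀ x ∈ S, ∀ y ∈ S, x ∪ y ∈ S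

/-- A finite collection of subsets of `Ω` is incompressible if no proper
subcollection has the same union. -/
def Incompressible (F : Finset (Set Ω)) : Prop :=
  ∀ F' ⊂ F, ⋃₀ (↑F' : Set (Set Ω)) ≠ ⋃₀ (↑F : Set (Set Ω))

/-- `S` has infinite breadth: incompressible subcollections of every size. -/
def InfiniteBreadth (S : Set (Set Ω)) : Prop :=
  ∀ n : ℕ, ∃ F : Finset (Set Ω), ↑F ⊆ S ∧ F.card = n ∧ Incompressible F

/-- `S` has finite breadth. -/
def FiniteBreadth (S : Set (Set Ω)) : Prop :=
  ∃ N : ℕ, ∀ F : Finset (Set Ω), ↑F ⊆ S → Incompressible F → F.card ≤ N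

/-- `S` has breadth at most `m`. -/
def BreadthLE (S : Set (Set Ω)) (m : ℕ) : Prop :=
  ∀ F : Finset (Set Ω), ↑F ⊆ S → Incompressible F → F.card ≤ m

/-- `S ⊓ a = { x ∩ a : x ∈ S }`. -/
def proj (S : Set (Set Ω)) (a : Set Ω) : Set (Set Ω) := (fun x => x ∩ a) '' S

/-- `S ⊖ a = { x \ a : x ∈ S }`. -/
def ominus (S : Set (Set Ω)) (a : Set Ω) : Set (Set Ω) := (fun x => x \ a) '' S

/-- `S^{−Γ} = { x ∈ S : x ∩ Γ = ∅ }`. -/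
def avoid (S : Set (Set Ω)) (Γ : Set Ω) : Set (Set Ω) := {x ∈ S | x ∩ Γ = ∅}

/-- A spread: pairwise disjoint nonempty finite sets with sizes tending to infinity. -/
def IsSpread (E : ℕ → Set Ω) : Prop :=
  (∀ n, (E n).Finite) ∧ (∀ n, (E n).Nonempty) ∧
  (∀ m n, m ≠ n → Disjoint (E m) (E n)) ∧
  Tendsto (fun n => (E n).ncard) atTop atTop

/-- The join of a spread. -/
def sjoin (E : ℕ → Set Ω) : Set Ω := ⋃ n, E n

/-- The set system `T_max(ℰ)`. -/
def Tmax (E : ℕ → Set Ω) : Set (Set Ω) :=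
  {x | ∃ n, ∃ a : Set Ω, a ⊆ E n ∧ a.Nonempty ∧ x = (⋃ k < n, E k) ∪ a}

/-- The set system `T_min(ℰ)`. -/
def Tmin (E : ℕ → Set Ω) : Set (Set Ω) :=
  {x | ∃ n, ∃ a : Set Ω, a ⊆ E n ∧ a.Nonempty ∧ x = a ∪ ⋃ k > n, E k}

/-- The set system `T_ort(ℰ)`. -/
def Tort (E : ℕ → Set Ω) : Set (Set Ω) :=
  {x | ∃ n, ∃ a : Set Ω, a ⊆ E n ∧ a.Nonempty ∧
        x = (⋃ k < n, E k) ∪ a ∪ ⋃ k > n, E k}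

/-- A refinement of a spread. -/
def Refines (F E : ℕ → Set Ω) : Prop :=
  IsSpread F ∧ ∃ g : ℕ → ℕ, Function.Injective g ∧ ∀ j, F j ⊆ E (g j)

/-- The sequence `a` shatters the spread `E`. -/
def Shatters (a : ℕ → Set Ω) (E : ℕ → Set Ω) : Prop :=
  ∀ (m : ℕ) (y : ℕ → Set Ω), (∀ j < m, y j = a j ∨ y j = (a j)ᶜ) →
    Tendsto (fun n => (E n ∩ ⋂ j < m, y j).ncard) atTop atTop

/-- A finite partition of `Ω`. -/
def IsPartitionC (C : Finset (Set Ω)) : Prop :=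
  (∀ c ∈ C, ∀ d ∈ C, c ≠ d → Disjoint c d) ∧ ⋃₀ (↑C : Set (Set Ω)) = univ

/-- `C` colours the spread `E`. -/
def Colours (C : Finset (Set Ω)) (E : ℕ → Set Ω) : Prop :=
  ∀ c ∈ C, Tendsto (fun n => (c ∩ E n).ncard) atTop atTop

/-- The colouring `C` of the spread `E` is `S`-decisive. -/
def Decisive (S : Set (Set Ω)) (C : Finset (Set Ω)) (E : ℕ → Set Ω) : Prop :=
  ∃ c₀ ∈ C, ∀ x ∈ S, ∃ B : ℕ, ∀ n,
    (x ∩ c₀ ∩ E n).ncard ≤ B ∨ ∃ c ∈ C, (xᶜ ∩ c ∩ E n).ncard ≤ B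

/-- `F` halves `D` with respect to `(E n)_{n ∈ N}`. -/
def Halves (F D : Set Ω) (E : ℕ → Set Ω) (N : Set ℕ) : Prop :=
  Tendsto (fun n => (D ∩ F ∩ E n).ncard) (atTop ⊓ 𝓟 N) atTop ∧
  Tendsto (fun n => ((D \ F) ∩ E n).ncard) (atTop ⊓ 𝓟 N) atTop

/-- `Ew` is a witness of incompressibility for the collection `F`. -/
def IsWitness (F : Finset (Set Ω)) (Ew : Set Ω) : Prop :=
  ∃ w : Set Ω → Ω, (∀ x ∈ F, w x ∈ x ∧ ∀ y ∈ F, y ≠ x → w x ∉ y) ∧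
    Ew = w '' (↑F : Set (Set Ω))

/-- Condition (A). -/
def CondA (S : Set (Set Ω)) : Prop :=
  ∀ k : ℕ, ∀ p ∈ insert (∅ : Set Ω) S, InfiniteBreadth (proj S pᶜ) →
    ∃ F : Finset (Set Ω), ↑F ⊆ ominus S p ∧ F.card = k ∧ Incompressible F ∧
      InfiniteBreadth (proj (ominus S p) (⋃₀ (↑F : Set (Set Ω)))ᶜ)

/-- Condition (B). -/
def CondB (S : Set (Set Ω)) : Prop :=
  ∀ k : ℕ, ∀ c Γ : Set Ω, InfiniteBreadth (proj (avoid S Γ) c) →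
    ∃ F : Finset (Set Ω), ↑F ⊆ proj (avoid S Γ) c ∧ F.card = k ∧ Incompressible F ∧
      ∃ Ew : Set Ω, IsWitness F Ew ∧ InfiniteBreadth (proj (avoid S (Γ ∪ Ew)) c)

/-- Incompressibility in an abstract (sup-)semilattice: the product (sup) over any proper
nonempty subset differs from the product over the whole set. -/
def AIncomp {S : Type*} [SemilatticeSup S] (E : Finset S) : Prop :=
  ∀ E' ⊂ E, ∀ (h' : E'.Nonempty) (h : E.Nonempty), E'.sup' h' id ≠ E.sup' h id

/-- Incompressibility in an abstract meet-semilattice. -/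
def AIncompInf {S : Type*} [SemilatticeInf S] (E : Finset S) : Prop :=
  ∀ E' ⊂ E, ∀ (h' : E'.Nonempty) (h : E.Nonempty), E'.inf' h' id ≠ E.inf' h id

/-- The standard spread on ℕ × ℕ: `E0 n = {(n,k) : k ≤ n}` (0-based, |E0 n| = n+1). -/
def E0 : ℕ → Set (ℕ × ℕ) := fun n => {p | p.1 = n ∧ p.2 ≤ n}
section Aux

variable {Ω : Type*}

lemma unionClosed_sUnion_finset {S : Set (Set Ω)} (hS : UnionClosed S) :
    ∀ G : Finset (Set Ω), G.Nonempty → ↑G ⊆ S → ⋃₀ (↑G : Set (Set Ω)) ∈ S := by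
  intro G
  induction G using Finset.induction_on with
  | empty => intro h; exact absurd h (by simp)
  | @insert x G hx ih =>
    intro _ hsub
    rcases G.eq_empty_or_nonempty with rfl | hG
    · simpa using hsub (by simp)
    · have h1 : x ∈ S := hsub (by simp)
      have h2 : ⋃₀ (↑G : Set (Set Ω)) ∈ S := ih hG (fun y hy => hsub (by simp [hy]))
      have : ⋃₀ (↑(insert x G) : Set (Set Ω)) = x ∪ ⋃₀ (↑G : Set (Set Ω)) := by
        simp [Set.sUnion_insert]
      rw [this]
      exact hS x h1 _ h2

lemma unionClosed_union_biUnion {S : Set (Set Ω)} (hS : UnionClosed S) {x : Set Ω} (hx : x ∈ S)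
    (g : ℕ → Set Ω) (n : ℕ) (hg : ∀ i < n, g i ∈ S) : x ∪ ⋃ i, ⋃ _ : i < n, g i ∈ S := by
  induction n with
  | zero => simpa using hx
  | succ n ih =>
    rw [Set.biUnion_lt_succ, ← Set.union_assoc]
    exact hS _ (ih (fun i hi => hg i (Nat.lt_succ_of_lt hi))) _ (hg n (Nat.lt_succ_self n))

lemma trace_eq {y x : Set Ω} {E : ℕ → Set Ω} (h1 : x ⊆ y) (h2 : x ⊆ sjoin E)
    (h3 : ∀ i, y ∩ E i ⊆ x) : y ∩ sjoin E = x := by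
  apply Set.Subset.antisymm
  · rintro z ⟨hzy, hzj⟩
    obtain ⟨i, hi⟩ := Set.mem_iUnion.1 hzj
    exact h3 i ⟨hzy, hi⟩
  · exact Set.subset_inter h1 h2

lemma ultra_fiber {β : Type*} (U : Ultrafilter ℕ) (g : ℕ → β) (hfin : (Set.range g).Finite) :
    ∃ b, {m | g m = b} ∈ U := by
  by_contra h
  push_neg at h
  have h3 : (⋂ b ∈ Set.range g, {m | g m = b}ᶜ) ∈ U :=
    (Filter.biInter_mem hfin).2 fun b _ => (Ultrafilter.compl_mem_iff_notMem).2 (h b)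
  obtain ⟨m, hm⟩ := Ultrafilter.nonempty_of_mem h3
  have := Set.mem_iInter₂.1 hm (g m) ⟨m, rfl⟩
  exact this rfl

end Aux
section Aux2

variable {Ω : Type*}

lemma witness_system [Nonempty Ω] {S : Set (Set Ω)} (hS : UnionClosed S) (hb : InfiniteBreadth S) (k : ℕ) :
    ∃ (E : Finset Ω) (X : Set Ω → Set Ω), E.card = k ∧
      (∀ a : Set Ω, a ⊆ ↑E → (a.Nonempty → X a ∈ S) ∧ X a ∩ ↑E = a) ∧
      (∀ a : Set Ω, X a = ⋃ p ∈ a, X {p}) := by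
  obtain ⟨F, hFS, hcard, hinc⟩ := hb k
  have hw : ∀ x ∈ F, ∃ w : Ω, w ∈ x ∧ ∀ y ∈ F, y ≠ x → w ∉ y := by
    intro x hx
    have hsub : F.erase x ⊂ F := Finset.erase_ssubset hx
    have hne := hinc _ hsub
    have hss : ⋃₀ (↑(F.erase x) : Set (Set Ω)) ⊆ ⋃₀ (↑F : Set (Set Ω)) :=
      Set.sUnion_subset_sUnion (by exact_mod_cast Finset.erase_subset x F)
    obtain ⟨w, hw1, hw2⟩ : ∃ w, w ∈ ⋃₀ (↑F : Set (Set Ω)) ∧ w ∉ ⋃₀ (↑(F.erase x) : Set (Set Ω)) := by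
      by_contra h
      push_neg at h
      exact hne (Set.Subset.antisymm hss h)
    obtain ⟨y, hy, hwy⟩ := hw1
    have hyF : y ∈ F := hy
    rcases eq_or_ne y x with rfl | hne'
    · refine ⟨w, hwy, fun z hz hzx hwz => hw2 ⟨z, ?_, hwz⟩⟩
      exact Finset.mem_coe.2 (Finset.mem_erase.2 ⟨hzx, hz⟩)
    · exact absurd ⟨y, Finset.mem_coe.2 (Finset.mem_erase.2 ⟨hne', hyF⟩), hwy⟩ hw2
  choose! w hw1 hw2 using hw
  have hinj : ∀ x ∈ F, ∀ y ∈ F, w x = w y → x = y := by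
    intro x hx y hy he
    by_contra hne
    exact hw2 y hy x hx hne (he ▸ hw1 x hx)
  refine ⟨F.image w, fun a => ⋃₀ {x : Set Ω | x ∈ F ∧ w x ∈ a}, ?_, ?_, ?_⟩
  · rw [Finset.card_image_of_injOn, hcard]
    intro x hx y hy he
    exact hinj x hx y hy he
  · intro a ha
    constructor
    · intro hane
      show ⋃₀ {x : Set Ω | x ∈ F ∧ w x ∈ a} ∈ S
      have heq : ⋃₀ {x : Set Ω | x ∈ F ∧ w x ∈ a}
          = ⋃₀ (↑(F.filter (fun x => w x ∈ a)) : Set (Set Ω)) := by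
        ext x
        simp [Finset.mem_filter, and_comm]
      rw [heq]
      apply unionClosed_sUnion_finset hS
      · obtain ⟨p, hp⟩ := hane
        obtain ⟨x, hxF, hxw⟩ := Finset.mem_image.1 (ha hp)
        exact ⟨x, Finset.mem_filter.2 ⟨hxF, hxw ▸ hp⟩⟩
      · intro y hy
        exact hFS (Finset.mem_coe.2 (Finset.filter_subset _ _ (Finset.mem_coe.1 hy)))
    · ext p
      constructor
      · rintro ⟨⟨x, ⟨hxF, hxa⟩, hpx⟩, hpE⟩
        obtain ⟨y, hyF, hyw⟩ := Finset.mem_image.1 hpE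
        rcases eq_or_ne y x with rfl | hne'
        · exact hyw ▸ hxa
        · exact absurd hpx (hyw ▸ hw2 y hyF x hxF hne'.symm)
      · intro hp
        have hpE : p ∈ (↑(F.image w) : Set Ω) := ha hp
        obtain ⟨y, hyF, hyw⟩ := Finset.mem_image.1 hpE
        exact ⟨⟨y, ⟨hyF, hyw ▸ hp⟩, hyw ▸ hw1 y hyF⟩, hpE⟩
  · intro a
    ext z
    simp only [Set.mem_sUnion, Set.mem_iUnion, Set.mem_setOf_eq, Set.mem_singleton_iff]
    constructor
    · rintro ⟨x, ⟨hxF, hxa⟩, hzx⟩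
      exact ⟨w x, hxa, x, ⟨hxF, rfl⟩, hzx⟩
    · rintro ⟨p, hpa, x, ⟨hxF, hxw⟩, hzx⟩
      exact ⟨x, ⟨hxF, hxw ▸ hpa⟩, hzx⟩

end Aux2
section Aux3

variable {Ω : Type*}

/-- Level data: a counter, a finite set, and a "realization" map. -/
abbrev LData (Ω : Type*) := ℕ × Finset Ω × (Set Ω → Set Ω)

/-- Unary goodness of level data. -/
def GoodU (S : Set (Set Ω)) (d : LData Ω) : Prop :=
  4 * d.1 + 4 ≤ d.2.1.card ∧
  (∀ a : Set Ω, a ⊆ ↑d.2.1 → (a.Nonempty → d.2.2 a ∈ S) ∧ d.2.2 a ∩ ↑d.2.1 = a) ∧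
  (∀ a : Set Ω, d.2.2 a = ⋃ p ∈ a, d.2.2 {p})

/-- Pairwise goodness of level data (later level `e` versus earlier level `d`). -/
def GoodP (d e : LData Ω) : Prop :=
  d.1 < e.1 ∧ Disjoint (↑d.2.1 : Set Ω) (↑e.2.1 : Set Ω) ∧
  (∀ p ∈ d.2.1, (↑e.2.1 : Set Ω) ⊆ d.2.2 {p} ∨ (↑e.2.1 : Set Ω) ∩ d.2.2 {p} = ∅) ∧
  (∀ p ∈ e.2.1, ∀ q ∈ e.2.1, ∀ z ∈ d.2.1, (z ∈ e.2.2 {p} ↔ z ∈ e.2.2 {q}))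

lemma ext_step [Nonempty Ω] {S : Set (Set Ω)} (hS : UnionClosed S) (hb : InfiniteBreadth S)
    (s : Finset (LData Ω)) : ∃ e : LData Ω, GoodU S e ∧ ∀ d ∈ s, GoodP d e := by
  classical
  set B := s.sup (fun d => d.1) + 1 with hB
  set Pts := s.biUnion (fun d => d.2.1) with hPts
  let I := {d // d ∈ s} × {p // p ∈ Pts}
  let γ := I → Bool × Bool
  obtain ⟨E₀, X, hcard, hXa, hXs⟩ :=
    witness_system hS hb (Pts.card + (Fintype.card γ) * (4 * B + 4))
  let colour : Ω → γ := fun q ip =>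
    (decide (q ∈ (ip.1.1.2.2) {(ip.2.1 : Ω)}), decide ((ip.2.1 : Ω) ∈ X {q}))
  have hW' : (Fintype.card γ) * (4 * B + 4) ≤ (E₀ \ Pts).card := by
    have h1 := Finset.le_card_sdiff Pts E₀
    omega
  obtain ⟨v, -, hv⟩ := Finset.exists_le_card_fiber_of_mul_le_card_of_maps_to
    (f := colour) (s := E₀ \ Pts) (t := (Finset.univ : Finset γ))
    (fun a _ => Finset.mem_univ _) Finset.univ_nonempty
    (by rwa [Finset.card_univ])
  set E₁ := (E₀ \ Pts).filter (fun q => colour q = v) with hE₁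
  have hE₁sub : E₁ ⊆ E₀ := (Finset.filter_subset _ _).trans (Finset.sdiff_subset)
  have hcoe : (↑E₁ : Set Ω) ⊆ ↑E₀ := Finset.coe_subset.2 hE₁sub
  have hE₁col : ∀ q ∈ E₁, colour q = v := fun q hq => (Finset.mem_filter.1 hq).2
  refine ⟨(B, E₁, X), ⟨hv, ?_, hXs⟩, ?_⟩
  · intro a ha
    have ha0 : a ⊆ ↑E₀ := ha.trans hcoe
    refine ⟨(hXa a ha0).1, ?_⟩
    have h2 := (hXa a ha0).2
    apply Set.Subset.antisymm
    · intro z hz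
      have : z ∈ X a ∩ ↑E₀ := ⟨hz.1, hcoe hz.2⟩
      exact h2 ▸ this
    · intro z hz
      have hz' : z ∈ X a ∩ ↑E₀ := h2.symm ▸ hz
      exact ⟨hz'.1, ha hz⟩
  · intro d hd
    have hdPts : d.2.1 ⊆ Pts := Finset.subset_biUnion_of_mem (fun d => d.2.1) hd
    refine ⟨?_, ?_, ?_, ?_⟩
    · have : d.1 ≤ s.sup (fun d => d.1) := Finset.le_sup hd
      omega
    · rw [Finset.disjoint_coe]
      apply Finset.disjoint_left.2
      intro z hz hzE₁
      exact (Finset.mem_sdiff.1 (Finset.filter_subset _ _ hzE₁)).2 (hdPts hz)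
    · intro p hp
      set ip : I := (⟨d, hd⟩, ⟨p, hdPts hp⟩) with hip
      have hcol : ∀ q ∈ E₁, (q ∈ d.2.2 {p}) = ((v ip).1 = true) := by
        intro q hq
        have h := congrFun (hE₁col q hq) ip
        have h1 : decide (q ∈ d.2.2 {p}) = (v ip).1 := congrArg Prod.fst h
        rw [← h1, decide_eq_true_eq]
      by_cases hb1 : (v ip).1 = true
      · left
        intro q hq
        have hq' : q ∈ E₁ := hq
        exact (Iff.of_eq (hcol q hq')).2 hb1
      · right
        apply Set.eq_empty_iff_forall_notMem.2
        rintro q ⟨hq1, hq2⟩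
        exact hb1 ((Iff.of_eq (hcol q hq1)).1 hq2)
    · intro p hp q hq z hz
      set iz : I := (⟨d, hd⟩, ⟨z, hdPts hz⟩) with hiz
      have h1 : decide (z ∈ X {p}) = (v iz).2 :=
        congrArg Prod.snd (congrFun (hE₁col p hp) iz)
      have h2 : decide (z ∈ X {q}) = (v iz).2 :=
        congrArg Prod.snd (congrFun (hE₁col q hq) iz)
      exact decide_eq_decide.1 (h1.trans h2.symm)

end Aux3
/-- Theorem (Subquotient theorem, concrete version). -/
theorem stmt1 {Ω : Type*} (S : Set (Set Ω)) (hS : UnionClosed S)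
    (hb : InfiniteBreadth S) :
    (∃ E : ℕ → Set Ω, IsSpread E ∧ Tmax E ⊆ proj S (sjoin E)) ∨
    (∃ E : ℕ → Set Ω, IsSpread E ∧ Tmin E ⊆ proj S (sjoin E)) ∨
    (∃ E : ℕ → Set Ω, IsSpread E ∧ Tort E ⊆ proj S (sjoin E)) := by
  classical
  -- Ω is nonempty
  have hne : Nonempty Ω := by
    obtain ⟨F, -, hcard2, -⟩ := hb 2
    obtain ⟨u, -, v, -, huv⟩ := Finset.one_lt_card.1 (by rw [hcard2]; norm_num)
    by_contra h
    exact huv (by ext z; exact absurd ⟨z⟩ h)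
  -- Phase 1: the regularized sequence of levels
  obtain ⟨f, hfU, hfP⟩ :=
    exists_seq_of_forall_finset_exists (GoodU S) GoodP (fun s _ => ext_step hS hb s)
  set U : Ultrafilter ℕ := Filter.hyperfilter ℕ with hU
  have hUgt : ∀ n : ℕ, {m | n < m} ∈ U := by
    intro n
    apply Filter.mem_hyperfilter_of_finite_compl
    have : {m | n < m}ᶜ = Set.Iic n := by ext m; simp [Set.mem_Iic, not_lt]
    rw [this]; exact Set.finite_Iic n
  have hsm : StrictMono (fun n => (f n).1) := fun a b hab => (hfP a b hab).1
  have hcard : ∀ n, 4 * n + 4 ≤ (f n).2.1.card := by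
    intro n
    have h1 : n ≤ (f n).1 := hsm.le_apply
    have h2 := (hfU n).1
    omega
  have hEne : ∀ n, (f n).2.1.Nonempty := fun n => Finset.card_pos.1 (by have := hcard n; omega)
  choose pt hpt using hEne
  set g : ℕ → ℕ → Finset Ω :=
    fun n m => (f n).2.1.filter (fun z => z ∈ (f m).2.2 {pt m}) with hgdef
  -- the downward traces
  have htrace : ∀ n m, n < m → ∀ a : Set Ω, a ⊆ ↑(f m).2.1 → a.Nonempty →
      (f m).2.2 a ∩ ↑(f n).2.1 = ↑(g n m) := by
    intro n m hnm a ha hane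
    obtain ⟨p0, hp0⟩ := hane
    have hconst := (hfP n m hnm).2.2.2
    have hXa := (hfU m).2.2 a
    ext z
    constructor
    · rintro ⟨hz1, hz2⟩
      rw [hXa] at hz1
      obtain ⟨p, hp, hzp⟩ := Set.mem_iUnion₂.1 hz1
      have hz2' : z ∈ (f n).2.1 := Finset.mem_coe.1 hz2
      have hpm : p ∈ (f m).2.1 := Finset.mem_coe.1 (ha hp)
      have hzt := (hconst p hpm (pt m) (hpt m) z hz2').1 hzp
      exact Finset.mem_coe.2 (Finset.mem_filter.2 ⟨hz2', hzt⟩)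
    · intro hz
      obtain ⟨hz2', hzpt⟩ := Finset.mem_filter.1 (Finset.mem_coe.1 hz)
      have hp0m : p0 ∈ (f m).2.1 := Finset.mem_coe.1 (ha hp0)
      have hzp0 : z ∈ (f m).2.2 {p0} := (hconst p0 hp0m (pt m) (hpt m) z hz2').2 hzpt
      refine ⟨?_, Finset.mem_coe.2 hz2'⟩
      rw [hXa]
      exact Set.mem_iUnion₂.2 ⟨p0, hp0, hzp0⟩
  -- ultrafilter limits of downward traces
  have hcex : ∀ n, ∃ cc : Finset Ω, {m | n < m ∧ g n m = cc} ∈ U := by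
    intro n
    have hfin : (Set.range (g n)).Finite := by
      apply (Finset.finite_toSet ((f n).2.1.powerset)).subset
      rintro t ⟨m, rfl⟩
      simp only [Finset.coe_powerset, Set.mem_preimage, Set.mem_powerset_iff,
        Finset.coe_subset, Finset.mem_coe]
      exact Finset.filter_subset _ _
    obtain ⟨cc, hcc⟩ := ultra_fiber U (g n) hfin
    refine ⟨cc, ?_⟩
    have := Filter.inter_mem (hUgt n) hcc
    exact this
  choose c hc using hcex
  have hcsub : ∀ n, c n ⊆ (f n).2.1 := by
    intro n
    obtain ⟨m, -, hm⟩ := Ultrafilter.nonempty_of_mem (hc n)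
    rw [← hm]
    exact Finset.filter_subset _ _
  -- upward types of points
  set ε : ℕ → Ω → Prop :=
    fun n p => {m | (↑(f m).2.1 : Set Ω) ⊆ (f n).2.2 {p}} ∈ U with hεdef
  -- the halving construction
  set Dn : ℕ → Finset Ω :=
    fun n => if 2 * (c n).card ≤ (f n).2.1.card then (f n).2.1 \ c n else c n with hDndef
  set δ : ℕ → Prop := fun n => ¬ (2 * (c n).card ≤ (f n).2.1.card) with hδdef
  set An : ℕ → Finset Ω := fun n => (Dn n).filter (fun p => ε n p) with hAndef
  set εb : ℕ → Prop := fun n => (Dn n).card ≤ 2 * (An n).card with hεbdef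
  set Fn : ℕ → Finset Ω :=
    fun n => if (Dn n).card ≤ 2 * (An n).card then An n else Dn n \ An n with hFndef
  have hDsub : ∀ n, Dn n ⊆ (f n).2.1 := by
    intro n
    by_cases h : 2 * (c n).card ≤ (f n).2.1.card
    · simp only [hDndef, if_pos h]; exact Finset.sdiff_subset
    · simp only [hDndef, if_neg h]; exact hcsub n
  have hD1 : ∀ n, 2 * n + 2 ≤ (Dn n).card := by
    intro n
    have h1 := hcard n
    have h2 : (c n).card ≤ (f n).2.1.card := Finset.card_le_card (hcsub n)
    by_cases h : 2 * (c n).card ≤ (f n).2.1.card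
    · simp only [hDndef, if_pos h]
      rw [Finset.card_sdiff_of_subset (hcsub n)]
      omega
    · simp only [hDndef, if_neg h]
      omega
  have hAsub : ∀ n, An n ⊆ Dn n := fun n => Finset.filter_subset _ _
  have hFsub : ∀ n, Fn n ⊆ Dn n := by
    intro n
    by_cases h : (Dn n).card ≤ 2 * (An n).card
    · simp only [hFndef, if_pos h]; exact hAsub n
    · simp only [hFndef, if_neg h]; exact Finset.sdiff_subset
  have hF1 : ∀ n, n + 1 ≤ (Fn n).card := by
    intro n
    have h1 := hD1 n
    have h2 : (An n).card ≤ (Dn n).card := Finset.card_le_card (hAsub n)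
    by_cases h : (Dn n).card ≤ 2 * (An n).card
    · simp only [hFndef, if_pos h]; omega
    · simp only [hFndef, if_neg h]
      rw [Finset.card_sdiff_of_subset (hAsub n)]
      omega
  have hFε : ∀ n, ∀ p ∈ Fn n, (ε n p ↔ εb n) := by
    intro n p hp
    by_cases h : (Dn n).card ≤ 2 * (An n).card
    · simp only [hFndef, if_pos h] at hp
      have : ε n p := (Finset.mem_filter.1 hp).2
      simp only [hεbdef]
      exact iff_of_true this h
    · simp only [hFndef, if_neg h] at hp
      have : ¬ ε n p := by
        intro hεp
        exact (Finset.mem_sdiff.1 hp).2 (Finset.mem_filter.2 ⟨(Finset.mem_sdiff.1 hp).1, hεp⟩)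
      simp only [hεbdef]
      exact iff_of_false this h
  have hDδ : ∀ n, ∀ p ∈ Dn n, (p ∈ c n ↔ δ n) := by
    intro n p hp
    by_cases h : 2 * (c n).card ≤ (f n).2.1.card
    · simp only [hDndef, if_pos h] at hp
      exact iff_of_false (Finset.mem_sdiff.1 hp).2 (fun hh => hh h)
    · simp only [hDndef, if_neg h] at hp
      exact iff_of_true hp h
  -- choice of the pattern
  obtain ⟨bb, hbb⟩ := ultra_fiber U (fun n => ((decide (δ n) : Bool), (decide (εb n) : Bool)))
    (Set.toFinite _)
  -- Phase 2 : choice of the subsequence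
  set r' : ℕ → ℕ → Prop := fun n m => n < m ∧ g n m = c n ∧ ∀ p ∈ Fn n,
    ((ε n p → (↑(f m).2.1 : Set Ω) ⊆ (f n).2.2 {p}) ∧
     (¬ ε n p → (↑(f m).2.1 : Set Ω) ∩ (f n).2.2 {p} = ∅)) with hr'def
  have hstep : ∀ t : Finset ℕ, (∀ x ∈ t, (decide (δ x), decide (εb x)) = bb) →
      ∃ y, (decide (δ y), decide (εb y)) = bb ∧ ∀ x ∈ t, r' x y := by
    intro t _
    have hmem : ({n | (decide (δ n), decide (εb n)) = bb} ∩ ⋂ x ∈ t, {m | r' x m}) ∈ U := by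
      apply Filter.inter_mem hbb
      refine (Filter.biInter_finset_mem _).2 ?_
      intro x hx
      have hpart : (⋂ p ∈ Fn x, {m | (ε x p → (↑(f m).2.1 : Set Ω) ⊆ (f x).2.2 {p}) ∧
          (¬ ε x p → (↑(f m).2.1 : Set Ω) ∩ (f x).2.2 {p} = ∅)}) ∈ U := by
        refine (Filter.biInter_finset_mem _).2 ?_
        intro p hp
        by_cases hεp : ε x p
        · refine Filter.mem_of_superset hεp ?_
          intro m hm
          exact ⟨fun _ => hm, fun h => absurd hεp h⟩
        · have h1 : {m | (↑(f m).2.1 : Set Ω) ⊆ (f x).2.2 {p}}ᶜ ∈ U :=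
            Ultrafilter.compl_mem_iff_notMem.2 hεp
          refine Filter.mem_of_superset (Filter.inter_mem h1 (hUgt x)) ?_
          rintro m ⟨hm1, hm2⟩
          refine ⟨fun h => absurd h hεp, fun _ => ?_⟩
          have hpE : p ∈ (f x).2.1 := hDsub x (hFsub x hp)
          rcases (hfP x m hm2).2.2.1 p hpE with h | h
          · exact absurd h hm1
          · exact h
      refine Filter.mem_of_superset (Filter.inter_mem (hc x) hpart) ?_
      rintro m ⟨⟨hm1, hm2⟩, hm3⟩
      refine ⟨hm1, hm2, fun p hp => ?_⟩
      exact Set.mem_iInter₂.1 hm3 p hp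
    obtain ⟨y, hy1, hy2⟩ := Ultrafilter.nonempty_of_mem hmem
    exact ⟨y, hy1, fun x hx => Set.mem_iInter₂.1 hy2 x hx⟩
  obtain ⟨N, hNP, hNr⟩ := exists_seq_of_forall_finset_exists
    (fun n => (decide (δ n), decide (εb n)) = bb) r' hstep
  -- the final spread
  have hNsm : StrictMono N := fun a b hab => (hNr a b hab).1
  set E' : ℕ → Set Ω := fun j => ↑(Fn (N j)) with hE'def
  have hE'subE : ∀ j, E' j ⊆ ↑(f (N j)).2.1 := by
    intro j
    exact_mod_cast Finset.coe_subset.2 ((hFsub (N j)).trans (hDsub (N j)))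
  -- the basic trace facts
  have hT1 : ∀ j (a : Set Ω), a ⊆ E' j → a.Nonempty → (f (N j)).2.2 a ∈ S :=
    fun j a ha hane => ((hfU (N j)).2.1 a (ha.trans (hE'subE j))).1 hane
  have hT2 : ∀ j (a : Set Ω), a ⊆ E' j → (f (N j)).2.2 a ∩ E' j = a := by
    intro j a ha
    have h2 := ((hfU (N j)).2.1 a (ha.trans (hE'subE j))).2
    apply Set.Subset.antisymm
    · rintro z ⟨hz1, hz2⟩
      have : z ∈ (f (N j)).2.2 a ∩ ↑(f (N j)).2.1 := ⟨hz1, hE'subE j hz2⟩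
      exact h2 ▸ this
    · intro z hz
      have hz' : z ∈ (f (N j)).2.2 a ∩ ↑(f (N j)).2.1 := h2.symm ▸ hz
      exact ⟨hz'.1, ha hz⟩
  have hT2' : ∀ j (a : Set Ω), a ⊆ E' j → a ⊆ (f (N j)).2.2 a := by
    intro j a ha z hz
    have := (hT2 j a ha).symm ▸ hz
    exact this.1
  have hT3 : ∀ i j, i < j → ∀ a : Set Ω, a ⊆ E' j → a.Nonempty →
      ((δ (N i) → E' i ⊆ (f (N j)).2.2 a) ∧
       (¬ δ (N i) → (f (N j)).2.2 a ∩ E' i = ∅)) := by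
    intro i j hij a ha hane
    have htr := htrace (N i) (N j) (hNsm hij) a (ha.trans (hE'subE j)) hane
    have hgc : g (N i) (N j) = c (N i) := (hNr i j hij).2.1
    rw [hgc] at htr
    constructor
    · intro hδi z hz
      have hzD : z ∈ Dn (N i) := hFsub (N i) hz
      have hzc : z ∈ c (N i) := (hDδ (N i) z hzD).2 hδi
      have : z ∈ (f (N j)).2.2 a ∩ ↑(f (N i)).2.1 := htr.symm ▸ (Finset.mem_coe.2 hzc : z ∈ (↑(c (N i)) : Set Ω))
      exact this.1
    · intro hδi
      apply Set.eq_empty_iff_forall_notMem.2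
      rintro z ⟨hz1, hz2⟩
      have hzD : z ∈ Dn (N i) := hFsub (N i) hz2
      have hzc : z ∈ (↑(c (N i)) : Set Ω) :=
        htr ▸ (⟨hz1, (hE'subE i) hz2⟩ : z ∈ (f (N j)).2.2 a ∩ ↑(f (N i)).2.1)
      exact hδi ((hDδ (N i) z hzD).1 (Finset.mem_coe.1 hzc))
  have hT4 : ∀ j i, j < i → ∀ a : Set Ω, a ⊆ E' j → a.Nonempty →
      ((εb (N j) → E' i ⊆ (f (N j)).2.2 a) ∧
       (¬ εb (N j) → (f (N j)).2.2 a ∩ E' i = ∅)) := by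
    intro j i hji a ha hane
    have hmatch := (hNr j i hji).2.2
    have hXa := (hfU (N j)).2.2 a
    constructor
    · intro hεbj
      obtain ⟨p0, hp0⟩ := hane
      have hp0F : p0 ∈ Fn (N j) := Finset.mem_coe.1 (ha hp0)
      have hεp0 : ε (N j) p0 := (hFε (N j) p0 hp0F).2 hεbj
      have hsub := (hmatch p0 hp0F).1 hεp0
      intro z hz
      rw [hXa]
      exact Set.mem_iUnion₂.2 ⟨p0, hp0, hsub (hE'subE i hz)⟩
    · intro hεbj
      apply Set.eq_empty_iff_forall_notMem.2
      rintro z ⟨hz1, hz2⟩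
      rw [hXa] at hz1
      obtain ⟨p, hp, hzp⟩ := Set.mem_iUnion₂.1 hz1
      have hpF : p ∈ Fn (N j) := Finset.mem_coe.1 (ha hp)
      have hεp : ¬ ε (N j) p := fun h => hεbj ((hFε (N j) p hpF).1 h)
      have hdisj := (hmatch p hpF).2 hεp
      exact Set.eq_empty_iff_forall_notMem.1 hdisj z ⟨hE'subE i hz2, hzp⟩
  -- the spread property
  have hspread : IsSpread E' := by
    refine ⟨fun n => Finset.finite_toSet _, ?_, ?_, ?_⟩
    · intro n
      have := hF1 (N n)
      exact_mod_cast Finset.coe_nonempty.2 (Finset.card_pos.1 (by omega))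
    · intro m n hmn
      have key : ∀ a b, a < b → Disjoint (E' a) (E' b) := by
        intro a b hab
        have := (hfP (N a) (N b) (hNsm hab)).2.1
        exact this.mono (hE'subE a) (hE'subE b)
      rcases hmn.lt_or_gt with h | h
      · exact key m n h
      · exact (key n m h).symm
    · refine Filter.tendsto_atTop_atTop.2 (fun b => ⟨b, fun j hbj => ?_⟩)
      have hq : (E' j).ncard = (Fn (N j)).card := by
        rw [hE'def]; exact Set.ncard_coe_finset _
      have h1 := hF1 (N j)
      have h2 : j ≤ N j := hNsm.le_apply
      omega
  -- pattern facts
  have hδN : ∀ j, (δ (N j) ↔ bb.1 = true) := by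
    intro j
    have := congrArg Prod.fst (hNP j)
    simp only at this
    rw [← this, decide_eq_true_eq]
  have hεbN : ∀ j, (εb (N j) ↔ bb.2 = true) := by
    intro j
    have := congrArg Prod.snd (hNP j)
    simp only at this
    rw [← this, decide_eq_true_eq]
  -- case analysis
  by_cases hb2 : bb.2 = true
  · by_cases hb1 : bb.1 = true
    · -- Tort
      refine Or.inr (Or.inr ⟨E', hspread, ?_⟩)
      rintro x ⟨n, a, haE, hane, rfl⟩
      refine ⟨(f (N n)).2.2 a, hT1 n a haE hane, ?_⟩
      apply trace_eq
      · apply Set.union_subset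
        apply Set.union_subset
        · apply Set.iUnion₂_subset
          intro k hk
          exact (hT3 k n hk a haE hane).1 ((hδN k).2 hb1)
        · exact hT2' n a haE
        · apply Set.iUnion₂_subset
          intro k hk
          exact (hT4 n k hk a haE hane).1 ((hεbN n).2 hb2)
      · apply Set.union_subset
        apply Set.union_subset
        · exact Set.iUnion₂_subset fun k _ => Set.subset_iUnion E' k
        · exact haE.trans (Set.subset_iUnion E' n)
        · exact Set.iUnion₂_subset fun k _ => Set.subset_iUnion E' k
      · intro i
        rcases lt_trichotomy i n with h | rfl | h
        · exact (Set.inter_subset_right).trans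
            ((Set.subset_iUnion₂ (s := fun k (_ : k < n) => E' k) i h).trans
              (Set.subset_union_left.trans Set.subset_union_left))
        · rw [hT2 i a haE]
          exact (Set.subset_union_right).trans Set.subset_union_left
        · exact (Set.inter_subset_right).trans
            ((Set.subset_iUnion₂ (s := fun k _ => E' k) i h).trans Set.subset_union_right)
    · -- Tmin
      have hδ' : ∀ j, ¬ δ (N j) := fun j h => hb1 ((hδN j).1 h)
      refine Or.inr (Or.inl ⟨E', hspread, ?_⟩)
      rintro x ⟨n, a, haE, hane, rfl⟩
      refine ⟨(f (N n)).2.2 a, hT1 n a haE hane, ?_⟩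
      apply trace_eq
      · apply Set.union_subset
        · exact hT2' n a haE
        · apply Set.iUnion₂_subset
          intro k hk
          exact (hT4 n k hk a haE hane).1 ((hεbN n).2 hb2)
      · apply Set.union_subset
        · exact haE.trans (Set.subset_iUnion E' n)
        · exact Set.iUnion₂_subset fun k _ => Set.subset_iUnion E' k
      · intro i
        rcases lt_trichotomy i n with h | rfl | h
        · rw [(hT3 i n h a haE hane).2 (hδ' i)]
          exact Set.empty_subset _
        · rw [hT2 i a haE]
          exact Set.subset_union_left
        · exact (Set.inter_subset_right).trans
            ((Set.subset_iUnion₂ (s := fun k (_ : k > n) => E' k) i h).trans Set.subset_union_right)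
  · -- Tmax
    have hεb' : ∀ j, ¬ εb (N j) := fun j h => hb2 ((hεbN j).1 h)
    refine Or.inl ⟨E', hspread, ?_⟩
    rintro x ⟨n, a, haE, hane, rfl⟩
    have hZS : ∀ i < n, (f (N i)).2.2 (E' i) ∈ S :=
      fun i _ => hT1 i (E' i) subset_rfl (hspread.2.1 i)
    refine ⟨(f (N n)).2.2 a ∪ ⋃ i, ⋃ _ : i < n, (f (N i)).2.2 (E' i),
      unionClosed_union_biUnion hS (hT1 n a haE hane) _ n hZS, ?_⟩
    apply trace_eq
    · apply Set.union_subset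
      · apply (Set.iUnion₂_mono (fun k (_ : k < n) => hT2' k (E' k) subset_rfl)).trans
        exact Set.subset_union_right
      · exact (hT2' n a haE).trans Set.subset_union_left
    · apply Set.union_subset
      · exact Set.iUnion₂_subset fun k _ => Set.subset_iUnion E' k
      · exact haE.trans (Set.subset_iUnion E' n)
    · intro i
      rintro z ⟨hz1, hz2⟩
      rcases lt_trichotomy i n with h | rfl | h
      · exact Set.subset_union_left ((Set.subset_iUnion₂ (s := fun k (_ : k < n) => E' k) i h) hz2)
      · rcases hz1 with hz1 | hz1
        · have : z ∈ a := (hT2 i a haE) ▸ (⟨hz1, hz2⟩ : z ∈ (f (N i)).2.2 a ∩ E' i)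
          exact Set.subset_union_right this
        · obtain ⟨k, hk, hzk⟩ := Set.mem_iUnion₂.1 hz1
          have := (hT4 k i hk (E' k) subset_rfl (hspread.2.1 k)).2 (hεb' k)
          exact ((Set.eq_empty_iff_forall_notMem.1 this z) (Set.mem_inter hzk hz2)).elim
      · rcases hz1 with hz1 | hz1
        · have := (hT4 n i h a haE hane).2 (hεb' n)
          exact ((Set.eq_empty_iff_forall_notMem.1 this z) (Set.mem_inter hz1 hz2)).elim
        · obtain ⟨k, hk, hzk⟩ := Set.mem_iUnion₂.1 hz1
          have := (hT4 k i (hk.trans h) (E' k) subset_rfl (hspread.2.1 k)).2 (hεb' k)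
          exact ((Set.eq_empty_iff_forall_notMem.1 this z) (Set.mem_inter hzk hz2)).elim
end

section
/- Let S be a union-closed set system on a set Ω, let a_1, …, a_n be subsets of Ω and let a = a_1 ∪ ⋯ ∪ a_n. If for each i the set system S ⊓ a_i has breadth at most m_i, then S ⊓ a has breadth at most m_1 + ⋯ + m_n; in particular, if S is thin in each a_i then S is thin in a. -/
open Set Filter
open scoped Classical

variable {Ω : Type*}

/-- Breadth of a projection onto a finite union is at most the sum of the breadths;
in particular thin in each piece implies thin in the union. -/
theorem stmt2 {Ω : Type*} (S : Set (Set Ω)) (hS : UnionClosed S) (n : ℕ)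
    (a : Fin n → Set Ω) (m : Fin n → ℕ) :
    ((∀ i, BreadthLE (proj S (a i)) (m i)) →
      BreadthLE (proj S (⋃ i, a i)) (∑ i, m i)) ∧
    ((∀ i, FiniteBreadth (proj S (a i))) →
      FiniteBreadth (proj S (⋃ i, a i))) := by
  have key : ∀ m : Fin n → ℕ, (∀ i, BreadthLE (proj S (a i)) (m i)) →
      BreadthLE (proj S (⋃ i, a i)) (∑ i, m i) := by
    intro m hm F hF hInc
    rcases F.eq_empty_or_nonempty with rfl | ⟨x₀, hx₀⟩
    · simp
    have hdata : ∀ x ∈ F, ∃ s : Set Ω, ∃ ω : Ω, ∃ i : Fin n,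
        s ∈ S ∧ s ∩ (⋃ i, a i) = x ∧ ω ∈ x ∧ ω ∈ a i ∧
        ∀ y ∈ F, y ≠ x → ω ∉ y := by
      intro x hx
      obtain ⟨s, hsS, hsx⟩ := hF (Finset.mem_coe.mpr hx)
      have hsub : (F.erase x : Finset (Set Ω)) ⊂ F := Finset.erase_ssubset hx
      have hne := hInc _ hsub
      have hss : ⋃₀ (↑(F.erase x) : Set (Set Ω)) ⊆ ⋃₀ (↑F : Set (Set Ω)) :=
        Set.sUnion_subset_sUnion (by exact_mod_cast Finset.erase_subset x F)
      obtain ⟨ω, hω1, hω2⟩ := Set.exists_of_ssubset (lt_of_le_of_ne hss hne)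
      obtain ⟨y, hyF, hωy⟩ := hω1
      have hyF' : y ∈ F := Finset.mem_coe.mp hyF
      have hyx : y = x := by
        by_contra hne'
        exact hω2 ⟨y, by simp [Finset.mem_coe, Finset.mem_erase, hne', hyF'], hωy⟩
      subst hyx
      have hωa : ω ∈ ⋃ i, a i := by rw [← hsx] at hωy; exact hωy.2
      obtain ⟨i, hi⟩ := Set.mem_iUnion.mp hωa
      refine ⟨s, ω, i, hsS, hsx, hωy, hi, ?_⟩
      intro z hz hzx hωz
      exact hω2 ⟨z, by simp [Finset.mem_coe, Finset.mem_erase, hzx, hz], hωz⟩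
    obtain ⟨s₀, ω₀, i₀, -⟩ := hdata x₀ hx₀
    haveI : Nonempty Ω := ⟨ω₀⟩
    haveI : Nonempty (Fin n) := ⟨i₀⟩
    choose! s ω idx hsS hsx hωx hωa hpriv using hdata
    have hcard : F.card = ∑ i : Fin n, (F.filter (fun x => idx x = i)).card :=
      Finset.card_eq_sum_card_fiberwise (fun x _ => Finset.mem_univ (idx x))
    rw [hcard]
    apply Finset.sum_le_sum
    intro i _
    set T := F.filter (fun x => idx x = i) with hTdef
    have hT : ∀ x ∈ T, x ∈ F ∧ idx x = i := by
      intro x hx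
      simpa [hTdef, Finset.mem_filter] using hx
    -- private point of x lies in s x ∩ a i for x ∈ T
    have hmem : ∀ x ∈ T, ω x ∈ s x ∩ a i := by
      intro x hx
      obtain ⟨hxF, hidx⟩ := hT x hx
      have h1 : ω x ∈ s x := by
        have h0 : ω x ∈ s x ∩ ⋃ i, a i := by rw [hsx x hxF]; exact hωx x hxF
        exact h0.1
      have h2 : ω x ∈ a i := by rw [← hidx]; exact hωa x hxF
      exact ⟨h1, h2⟩
    have hsub : ∀ x ∈ T, s x ∩ a i ⊆ x := by
      intro x hx t ht
      obtain ⟨hxF, _⟩ := hT x hx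
      rw [← hsx x hxF]
      exact ⟨ht.1, Set.mem_iUnion.mpr ⟨i, ht.2⟩⟩
    have hinj : Set.InjOn (fun x => s x ∩ a i) ↑T := by
      intro x hx y hy hxy
      by_contra hne
      have hxT : x ∈ T := Finset.mem_coe.mp hx
      have hyT : y ∈ T := Finset.mem_coe.mp hy
      have hxF := (hT x hxT).1
      have hyF := (hT y hyT).1
      have hxy' : s x ∩ a i = s y ∩ a i := hxy
      have : ω x ∈ s y ∩ a i := hxy' ▸ hmem x hxT
      have hωy : ω x ∈ y := hsub y hyT this
      exact hpriv x hxF y hyF (fun h => hne h.symm) hωy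
    set G := T.image (fun x => s x ∩ a i) with hGdef
    have hGcard : G.card = T.card := Finset.card_image_of_injOn hinj
    have hGsub : ↑G ⊆ proj S (a i) := by
      intro z hz
      obtain ⟨x, hxT, rfl⟩ := Finset.mem_image.mp (Finset.mem_coe.mp hz)
      exact ⟨s x, hsS x (hT x hxT).1, rfl⟩
    have hGinc : Incompressible G := by
      intro G' hG' heq
      obtain ⟨z, hzG, hzG'⟩ := Finset.exists_of_ssubset hG'
      obtain ⟨x, hxT, rfl⟩ := Finset.mem_image.mp hzG
      have hxF := (hT x hxT).1
      have hωmem : ω x ∈ ⋃₀ (↑G : Set (Set Ω)) :=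
        ⟨s x ∩ a i, Finset.mem_coe.mpr hzG, hmem x hxT⟩
      rw [← heq] at hωmem
      obtain ⟨z', hz'G', hωz'⟩ := hωmem
      have hz'G : z' ∈ G := hG'.subset (Finset.mem_coe.mp hz'G')
      obtain ⟨y, hyT, rfl⟩ := Finset.mem_image.mp hz'G
      have hyF := (hT y hyT).1
      by_cases hxy : y = x
      · subst hxy
        exact hzG' (Finset.mem_coe.mp hz'G')
      · have hωy : ω x ∈ y := hsub y hyT hωz'
        exact hpriv x hxF y hyF hxy hωy
    calc T.card = G.card := hGcard.symm
      _ ≤ m i := hm i G hGsub hGinc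
  refine ⟨key m, ?_⟩
  intro h
  choose N hN using h
  exact ⟨∑ i, N i, key N hN⟩
end

section
/- Let S be a union-closed set system on a set Ω with infinite breadth, and let p be a finite subset of Ω. Then S ⊓ (Ω \ p) has infinite breadth; that is, S is thick in the complement of p. -/
open Set Filter
open scoped Classical

variable {Ω : Type*}

/-- If `S` has infinite breadth and `p` is finite, then `S` is thick in `pᶜ`. -/
theorem stmt3 {Ω : Type*} (S : Set (Set Ω)) (hS : UnionClosed S)
    (hb : InfiniteBreadth S) (p : Set Ω) (hp : p.Finite) :
    InfiniteBreadth (proj S pᶜ) := by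
  intro n
  rcases Nat.eq_zero_or_pos n with hn | hn
  · exact ⟨∅, by simp, by simp [hn], fun F' h => absurd h (by simp)⟩
  obtain ⟨F, hFS, hcard, hInc⟩ := hb (n + hp.toFinset.card)
  -- each member of F has a private witness
  have priv : ∀ x ∈ F, ∃ w, w ∈ x ∧ ∀ y ∈ F, y ≠ x → w ∉ y := by
    intro x hx
    have hss : F.erase x ⊂ F := Finset.erase_ssubset hx
    have hne := hInc (F.erase x) hss
    have hsub : ⋃₀ (↑(F.erase x) : Set (Set Ω)) ⊆ ⋃₀ (↑F : Set (Set Ω)) := by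
      apply Set.sUnion_subset_sUnion
      exact_mod_cast Finset.coe_subset.2 hss.subset
    obtain ⟨w, hwF, hwE⟩ := Set.exists_of_ssubset ⟨hsub, fun h => hne (le_antisymm hsub h)⟩
    obtain ⟨z, hzF, hwz⟩ := hwF
    have hzx : z = x := by
      by_contra hzx
      exact hwE ⟨z, Finset.mem_coe.2 (Finset.mem_erase.2 ⟨hzx, Finset.mem_coe.1 hzF⟩), hwz⟩
    refine ⟨w, hzx ▸ hwz, fun y hy hyx hwy => hwE ⟨y, ?_, hwy⟩⟩
    exact Finset.mem_coe.2 (Finset.mem_erase.2 ⟨hyx, hy⟩)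
  have hFne : F.Nonempty := Finset.card_pos.1 (by omega)
  haveI : Nonempty Ω := by
    obtain ⟨x, hx⟩ := hFne
    obtain ⟨w, _, _⟩ := priv x hx
    exact ⟨w⟩
  choose! w hw1 hw2 using priv
  -- witnesses are distinct across F
  have hwne : ∀ x ∈ F, ∀ y ∈ F, x ≠ y → w x ≠ w y := by
    intro x hx y hy hxy h
    exact hw2 x hx y hy (Ne.symm hxy) (h ▸ hw1 y hy)
  -- the "bad" members, whose witness lies in p
  set B : Finset (Set Ω) := F.filter (fun x => w x ∈ p) with hB
  have hBcard : B.card ≤ hp.toFinset.card := by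
    apply Finset.card_le_card_of_injOn w
    · intro x hx
      simp only [hB, Finset.mem_coe, Finset.mem_filter] at hx
      simpa using hx.2
    · intro x hx y hy hxy
      simp only [hB, Finset.mem_coe, Finset.mem_filter] at hx hy
      by_contra hne
      exact hwne x hx.1 y hy.1 hne hxy
  set G : Finset (Set Ω) := F.filter (fun x => w x ∉ p) with hG
  have hGcard : n ≤ G.card := by
    have := Finset.card_filter_add_card_filter_not
      (s := F) (p := fun x => w x ∈ p)
    simp only [← hB] at this
    have : B.card + G.card = F.card := by
      convert this using 2
    omega
  obtain ⟨G₀, hG₀G, hG₀card⟩ := Finset.exists_subset_card_eq hGcard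
  have hG₀F : ∀ x ∈ G₀, x ∈ F ∧ w x ∉ p := by
    intro x hx
    have := hG₀G hx
    simp only [hG, Finset.mem_filter] at this
    exact this
  -- injectivity of projection on G₀
  have hinj : Set.InjOn (fun x => x ∩ pᶜ) ↑G₀ := by
    intro x hx y hy hxy
    by_contra hne
    obtain ⟨hxF, hxp⟩ := hG₀F x hx
    obtain ⟨hyF, _⟩ := hG₀F y hy
    have hwx : w x ∈ x ∩ pᶜ := ⟨hw1 x hxF, hxp⟩
    have hxy' : x ∩ pᶜ = y ∩ pᶜ := hxy
    rw [hxy'] at hwx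
    exact hw2 x hxF y hyF (fun h => hne h.symm) hwx.1
  refine ⟨G₀.image (fun x => x ∩ pᶜ), ?_, ?_, ?_⟩
  · intro z hz
    simp only [Finset.coe_image, Set.mem_image, Finset.mem_coe] at hz
    obtain ⟨x, hx, rfl⟩ := hz
    exact ⟨x, hFS (hG₀F x hx).1, rfl⟩
  · rw [Finset.card_image_of_injOn hinj, hG₀card]
  · intro F'' hss heq
    obtain ⟨z, hzI, hzF''⟩ := Finset.exists_of_ssubset hss
    obtain ⟨x, hxG₀, rfl⟩ := Finset.mem_image.1 hzI
    obtain ⟨hxF, hxp⟩ := hG₀F x hxG₀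
    have hwx : w x ∈ ⋃₀ (↑(G₀.image (fun x => x ∩ pᶜ)) : Set (Set Ω)) :=
      ⟨x ∩ pᶜ, by exact_mod_cast hzI, ⟨hw1 x hxF, hxp⟩⟩
    rw [← heq] at hwx
    obtain ⟨u, huF'', hwu⟩ := hwx
    have huI := hss.subset (by exact_mod_cast huF'')
    obtain ⟨y, hyG₀, rfl⟩ := Finset.mem_image.1 huI
    obtain ⟨hyF, _⟩ := hG₀F y hyG₀
    rcases eq_or_ne y x with rfl | hne
    · exact hzF'' (by exact_mod_cast huF'')
    · exact hw2 x hxF y hyF hne hwu.1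
end

section
/- Let S be a union-closed set system on a set Ω with infinite breadth which satisfies Condition (B), and suppose that for every spread ℰ in Ω the set system S ⊓ join(ℰ) does not contain T_max(ℰ). Then there exists a spread ℰ in Ω such that S ⊓ join(ℰ) contains T_min(ℰ). -/
open Set Filter
open scoped Classical

variable {Ω : Type*}

section Machinery

variable {Ω : Type*}

lemma incomp_of_witness (F : Finset (Set Ω)) (γ : Set Ω → Ω)
    (h : ∀ f ∈ F, γ f ∈ f ∧ ∀ f' ∈ F, f' ≠ f → γ f ∉ f') : Incompressible F := by
  intro F' hss hEq
  obtain ⟨f, hfF, hfF'⟩ := Finset.exists_of_ssubset hss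
  have h1 : γ f ∈ ⋃₀ (↑F : Set (Set Ω)) := ⟨f, Finset.mem_coe.2 hfF, (h f hfF).1⟩
  rw [← hEq] at h1
  obtain ⟨g, hgF', hγg⟩ := h1
  have hgF : g ∈ F := hss.1 hgF'
  have hne : g ≠ f := fun e => hfF' (e ▸ hgF')
  exact (h f hfF).2 g hgF hne hγg

lemma witness_of_incomp (F : Finset (Set Ω)) (h : Incompressible F) :
    ∀ f ∈ F, ∃ γ, γ ∈ f ∧ ∀ f' ∈ F, f' ≠ f → γ ∉ f' := by
  intro f hf
  have hsub : F.erase f ⊂ F := Finset.erase_ssubset hf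
  have hne := h _ hsub
  have hsubU : ⋃₀ (↑(F.erase f) : Set (Set Ω)) ⊆ ⋃₀ (↑F : Set (Set Ω)) :=
    Set.sUnion_subset_sUnion (Finset.coe_subset.2 (Finset.erase_subset f F))
  have hss := hsubU.ssubset_of_ne hne
  obtain ⟨γ, hγF, hγe⟩ := Set.exists_of_ssubset hss
  obtain ⟨g, hgF, hγg⟩ := hγF
  have hgf : g = f := by
    by_contra hgf
    exact hγe ⟨g, Finset.mem_coe.2 (Finset.mem_erase.2 ⟨hgf, hgF⟩), hγg⟩
  refine ⟨γ, hgf ▸ hγg, fun f' hf' hne' hγf' => hγe ⟨f', Finset.mem_coe.2 (Finset.mem_erase.2 ⟨hne', hf'⟩), hγf'⟩⟩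

lemma restrict_incomp {T : Set (Set Ω)} {r e : Set Ω} (hre : e ⊆ r)
    (G : Finset (Set Ω)) (hG : ↑G ⊆ proj T r) (γ : Set Ω → Ω)
    (hγ : ∀ f ∈ G, (γ f ∈ f ∧ γ f ∈ e) ∧ ∀ f' ∈ G, f' ≠ f → γ f ∉ f') :
    ∃ G' : Finset (Set Ω), ↑G' ⊆ proj T e ∧ G'.card = G.card ∧ Incompressible G' := by
  have hinj : Set.InjOn (fun f => f ∩ e) ↑G := by
    intro f hf f' hf' heq
    by_contra hne
    replace heq : f ∩ e = f' ∩ e := heq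
    have h1 : γ f ∈ f ∩ e := ⟨(hγ f hf).1.1, (hγ f hf).1.2⟩
    rw [heq] at h1
    exact (hγ f hf).2 f' hf' (fun e' => hne e'.symm) h1.1
  refine ⟨G.image (fun f => f ∩ e), ?_, ?_, ?_⟩
  · intro g hg
    obtain ⟨f, hfG, rfl⟩ := Finset.mem_image.1 (by exact_mod_cast hg)
    obtain ⟨t, ht, hte⟩ := hG hfG
    refine ⟨t, ht, ?_⟩
    have : r ∩ e = e := Set.inter_eq_self_of_subset_right hre
    rw [← hte, Set.inter_assoc, this]
  · exact Finset.card_image_of_injOn hinj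
  · set pick : Set Ω → Set Ω := fun g => if h : ∃ f, f ∈ G ∧ f ∩ e = g then h.choose else ∅ with hpick
    apply incomp_of_witness _ (fun g => γ (pick g))
    intro g hg
    obtain ⟨f, hfG, hfe⟩ := Finset.mem_image.1 hg
    have hex : ∃ f, f ∈ G ∧ f ∩ e = g := ⟨f, hfG, hfe⟩
    have hpg : pick g = hex.choose := by simp [hpick, hex]
    obtain ⟨hpG, hpe⟩ := hex.choose_spec
    rw [hpg]
    constructor
    · have h2 : γ hex.choose ∈ hex.choose ∩ e := ⟨(hγ _ hpG).1.1, (hγ _ hpG).1.2⟩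
      rwa [hpe] at h2
    · intro g' hg' hne
      obtain ⟨f', hf'G, hf'e⟩ := Finset.mem_image.1 hg'
      have hff' : f' ≠ hex.choose := by
        intro e'; exact hne (by rw [← hf'e, e', hpe])
      intro hmem
      rw [← hf'e] at hmem
      exact (hγ _ hpG).2 f' hf'G hff' hmem.1

lemma empty_incomp : Incompressible (∅ : Finset (Set Ω)) := by
  intro F' hss
  exact absurd hss (by simp)

lemma thick_split {T : Set (Set Ω)} {r d : Set Ω} (h : InfiniteBreadth (proj T r)) :
    InfiniteBreadth (proj T (r ∩ d)) ∨ InfiniteBreadth (proj T (r \ d)) := by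
  by_contra hcon
  push_neg at hcon
  obtain ⟨h1, h2⟩ := hcon
  unfold InfiniteBreadth at h1 h2
  push_neg at h1 h2
  obtain ⟨n₁, hn₁⟩ := h1
  obtain ⟨n₂, hn₂⟩ := h2
  -- the empty family shows n₁ ≠ 0 and n₂ ≠ 0
  have hne₁ : n₁ ≠ 0 := fun e => hn₁ ∅ (by simp) (by simp [e]) empty_incomp
  have hne₂ : n₂ ≠ 0 := fun e => hn₂ ∅ (by simp) (by simp [e]) empty_incomp
  obtain ⟨F, hF, hcard, hinc⟩ := h (n₁ + n₂)
  have hFne : F.Nonempty := by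
    rw [← Finset.card_pos, hcard]; omega
  obtain ⟨f₀, hf₀⟩ := hFne
  obtain ⟨γ₀, hγ₀, _⟩ := witness_of_incomp F hinc f₀ hf₀
  haveI : Nonempty Ω := ⟨γ₀⟩
  set γfn : Set Ω → Ω := fun f =>
    if h : ∃ γ, γ ∈ f ∧ ∀ f' ∈ F, f' ≠ f → γ ∉ f' then h.choose else Classical.arbitrary Ω
    with hγfn
  have hγspec : ∀ f ∈ F, γfn f ∈ f ∧ ∀ f' ∈ F, f' ≠ f → γfn f ∉ f' := by
    intro f hf
    have hex := witness_of_incomp F hinc f hf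
    simp only [hγfn, dif_pos hex]
    exact hex.choose_spec
  have hsubr : ∀ f ∈ F, f ⊆ r := by
    intro f hf p hp
    obtain ⟨t, _, rfl⟩ := hF hf
    exact hp.2
  set G₁ := F.filter (fun f => γfn f ∈ d) with hG₁
  set G₂ := F.filter (fun f => ¬ (γfn f ∈ d)) with hG₂
  have hsum : G₁.card + G₂.card = n₁ + n₂ := by
    rw [hG₁, hG₂, Finset.card_filter_add_card_filter_not, hcard]
  have hcases : n₁ ≤ G₁.card ∨ n₂ ≤ G₂.card := by omega
  rcases hcases with hc | hc
  · obtain ⟨G, hGsub, hGcard⟩ := Finset.exists_subset_card_eq hc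
    have hGF : G ⊆ F := hGsub.trans (Finset.filter_subset _ _)
    have hwit : ∀ f ∈ G, (γfn f ∈ f ∧ γfn f ∈ r ∩ d) ∧ ∀ f' ∈ G, f' ≠ f → γfn f ∉ f' := by
      intro f hf
      have hfF := hGF hf
      have hfG₁ := hGsub hf
      exact ⟨⟨(hγspec f hfF).1, hsubr f hfF (hγspec f hfF).1,
        (Finset.mem_filter.1 hfG₁).2⟩, fun f' hf' hne => (hγspec f hfF).2 f' (hGF hf') hne⟩
    obtain ⟨G', hG'⟩ := restrict_incomp (Set.inter_subset_left) G
      (fun f hf => hF (hGF (by exact_mod_cast hf))) γfn hwit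
    exact hn₁ G' hG'.1 (hG'.2.1.trans hGcard) hG'.2.2
  · obtain ⟨G, hGsub, hGcard⟩ := Finset.exists_subset_card_eq hc
    have hGF : G ⊆ F := hGsub.trans (Finset.filter_subset _ _)
    have hwit : ∀ f ∈ G, (γfn f ∈ f ∧ γfn f ∈ r \ d) ∧ ∀ f' ∈ G, f' ≠ f → γfn f ∉ f' := by
      intro f hf
      have hfF := hGF hf
      have hfG₂ := hGsub hf
      exact ⟨⟨(hγspec f hfF).1, hsubr f hfF (hγspec f hfF).1,
        (Finset.mem_filter.1 hfG₂).2⟩, fun f' hf' hne => (hγspec f hfF).2 f' (hGF hf') hne⟩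
    obtain ⟨G', hG'⟩ := restrict_incomp (Set.diff_subset) G
      (fun f hf => hF (hGF (by exact_mod_cast hf))) γfn hwit
    exact hn₂ G' hG'.1 (hG'.2.1.trans hGcard) hG'.2.2

lemma thick_atoms {T : Set (Set Ω)} (x : Set Ω → Set Ω) (F : Finset (Set Ω)) :
    ∀ c : Set Ω, InfiniteBreadth (proj T c) →
      ∃ A ⊆ F, ∃ r, r ⊆ c ∧ InfiniteBreadth (proj T r) ∧
        (∀ f ∈ A, r ⊆ x f) ∧ (∀ f ∈ F, f ∉ A → r ∩ x f = ∅) := by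
  induction F using Finset.induction_on with
  | empty =>
    intro c hc
    exact ⟨∅, Finset.Subset.refl _, c, subset_rfl, hc, by simp, by simp⟩
  | @insert f₀ F hf₀F ih =>
    intro c hc
    rcases thick_split (d := x f₀) hc with hth | hth
    · obtain ⟨A, hAF, r, hrc, hr, hin, hout⟩ := ih (c ∩ x f₀) hth
      refine ⟨insert f₀ A, Finset.insert_subset_insert _ hAF, r,
        hrc.trans Set.inter_subset_left, hr, ?_, ?_⟩
      · intro f hf
        rcases Finset.mem_insert.1 hf with rfl | hf
        · exact hrc.trans Set.inter_subset_right
        · exact hin f hf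
      · intro f hf hfA
        rcases Finset.mem_insert.1 hf with rfl | hf
        · exact absurd (Finset.mem_insert_self f A) hfA
        · exact hout f hf (fun h => hfA (Finset.mem_insert_of_mem h))
    · obtain ⟨A, hAF, r, hrc, hr, hin, hout⟩ := ih (c \ x f₀) hth
      refine ⟨A, hAF.trans (Finset.subset_insert _ _), r,
        hrc.trans Set.diff_subset, hr, hin, ?_⟩
      intro f hf hfA
      rcases Finset.mem_insert.1 hf with rfl | hf
      · apply Set.eq_empty_of_subset_empty
        intro p hp
        exact (hrc hp.1).2 hp.2
      · exact hout f hf hfA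

lemma unionClosed_biUnion {S : Set (Set Ω)} (hS : UnionClosed S) (D : Finset Ω)
    (hne : D.Nonempty) (f : Ω → Set Ω) (hf : ∀ γ ∈ D, f γ ∈ S) :
    (⋃ γ ∈ D, f γ) ∈ S := by
  classical
  induction D using Finset.induction_on with
  | empty => exact absurd hne (by simp)
  | @insert a D haD ih =>
    rcases D.eq_empty_or_nonempty with rfl | hDne
    · simpa using hf a (Finset.mem_insert_self a ∅)
    · rw [Finset.set_biUnion_insert]
      exact hS _ (hf a (Finset.mem_insert_self a D)) _
        (ih hDne (fun γ hγ => hf γ (Finset.mem_insert_of_mem hγ)))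

structure StepOut (S : Set (Set Ω)) (Γ c : Set Ω) (k : ℕ) where
  Γ' : Set Ω
  c' : Set Ω
  W : Set Ω
  x : Ω → Set Ω
  b : Bool
  thick' : InfiniteBreadth (proj (avoid S Γ') c')
  Wfin : W.Finite
  Wcard : k ≤ W.ncard
  Wc : W ⊆ c
  WΓ' : W ⊆ Γ'
  WΓ : W ∩ Γ = ∅
  Γmono : Γ ⊆ Γ'
  cmono : c' ⊆ c
  hx : ∀ γ ∈ W, x γ ∈ S ∧ x γ ∩ Γ = ∅ ∧ x γ ∩ W = {γ} ∧
    (b = true → c' ⊆ x γ) ∧ (b = false → c' ∩ x γ = ∅)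

lemma step_core (S : Set (Set Ω)) (Γ c : Set Ω) (k : ℕ)
    (Γ2 r : Set Ω) (hΓ2 : Γ ⊆ Γ2) (hrc : r ⊆ c)
    (hrthick : InfiniteBreadth (proj (avoid S Γ2) r))
    (w : Set Ω → Ω) (tf : Set Ω → Set Ω) (B : Finset (Set Ω))
    (hwB : ∀ f ∈ B, w f ∈ f ∧ ∀ f' ∈ B, f' ≠ f → w f ∉ f')
    (hwΓ2 : ∀ f ∈ B, w f ∈ Γ2)
    (htB : ∀ f ∈ B, (tf f ∈ S ∧ tf f ∩ Γ = ∅) ∧ tf f ∩ c = f)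
    (hkB : k ≤ B.card) (b : Bool)
    (hbr : ∀ f ∈ B, (b = true → r ⊆ tf f) ∧ (b = false → r ∩ tf f = ∅)) :
    Nonempty (StepOut S Γ c k) := by
  have hinj : Set.InjOn w ↑B := by
    intro f hf f' hf' heq
    by_contra hne
    have h1 : w f ∈ f := (hwB f hf).1
    rw [heq] at h1
    exact (hwB f' hf').2 f hf (fun e => hne e) h1
  have hfc : ∀ f ∈ B, f ⊆ c := by
    intro f hf p hp
    rw [← (htB f hf).2] at hp
    exact hp.2
  set xf : Ω → Set Ω := fun γ => if h : ∃ f, f ∈ B ∧ w f = γ then tf h.choose else ∅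
    with hxf
  refine ⟨⟨Γ2, r, w '' ↑B, xf, b, hrthick, (B.finite_toSet.image w), ?_, ?_, ?_, ?_, hΓ2, hrc, ?_⟩⟩
  · rw [Set.ncard_image_of_injOn hinj, Set.ncard_coe_finset]
    exact hkB
  · rintro p ⟨f, hf, rfl⟩
    exact hfc f hf (hwB f hf).1
  · rintro p ⟨f, hf, rfl⟩
    exact hwΓ2 f hf
  · apply Set.eq_empty_of_subset_empty
    rintro p ⟨⟨f, hf, rfl⟩, hpΓ⟩
    have h1 : w f ∈ tf f ∩ c := by rw [(htB f hf).2]; exact (hwB f hf).1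
    have h2 : w f ∈ tf f ∩ Γ := ⟨h1.1, hpΓ⟩
    rw [(htB f hf).1.2] at h2
    exact h2
  · rintro γ ⟨f, hf, rfl⟩
    have hex : ∃ f', f' ∈ B ∧ w f' = w f := ⟨f, hf, rfl⟩
    have hxfγ : xf (w f) = tf hex.choose := by simp only [hxf, dif_pos hex]
    obtain ⟨hf₀B, hwf₀⟩ := hex.choose_spec
    set f₀ := hex.choose
    rw [hxfγ]
    have hmemf : ∀ f₁ ∈ B, w f₁ ∈ tf f₀ → f₁ = f₀ := by
      intro f₁ hf₁ hmem
      by_contra hne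
      have : w f₁ ∈ f₀ := by
        rw [← (htB f₀ hf₀B).2]
        exact ⟨hmem, hfc f₁ hf₁ (hwB f₁ hf₁).1⟩
      exact (hwB f₁ hf₁).2 f₀ hf₀B (fun e => hne e.symm) this
    refine ⟨(htB f₀ hf₀B).1.1, (htB f₀ hf₀B).1.2, ?_, ?_, ?_⟩
    · ext p
      constructor
      · rintro ⟨hpt, f₁, hf₁, rfl⟩
        have := hmemf f₁ hf₁ hpt
        rw [this, hwf₀]
        rfl
      · rintro rfl
        have hwf : w f ∈ f₀ := by rw [← hwf₀]; exact (hwB f₀ hf₀B).1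
        constructor
        · rw [← (htB f₀ hf₀B).2] at hwf; exact hwf.1
        · exact ⟨f, hf, rfl⟩
    · intro hb; exact (hbr f₀ hf₀B).1 hb
    · intro hb; exact (hbr f₀ hf₀B).2 hb

lemma step_exists (S : Set (Set Ω)) (hB : CondB S) (Γ c : Set Ω) (k : ℕ)
    (h : InfiniteBreadth (proj (avoid S Γ) c)) : Nonempty (StepOut S Γ c k) := by
  obtain ⟨F, hF, hcard, hinc, Ew, ⟨w, hw, hEw⟩, hthick⟩ := hB (2 * k) c Γ h
  have hrep : ∀ f ∈ F, ∃ t, (t ∈ S ∧ t ∩ Γ = ∅) ∧ t ∩ c = f := by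
    intro f hf
    obtain ⟨t, ht, hte⟩ := hF hf
    exact ⟨t, ⟨ht.1, ht.2⟩, hte⟩
  set tf : Set Ω → Set Ω :=
    fun f => if h : ∃ t, (t ∈ S ∧ t ∩ Γ = ∅) ∧ t ∩ c = f then h.choose else ∅ with htf
  have htspec : ∀ f ∈ F, (tf f ∈ S ∧ tf f ∩ Γ = ∅) ∧ tf f ∩ c = f := by
    intro f hf
    have hex := hrep f hf
    simp only [htf, dif_pos hex]
    exact hex.choose_spec
  obtain ⟨A, hAF, r, hrc, hrthick, hin, hout⟩ := thick_atoms tf F c hthick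
  have hwΓ2 : ∀ f ∈ F, w f ∈ Γ ∪ Ew := by
    intro f hf
    exact Or.inr (hEw ▸ ⟨f, Finset.mem_coe.2 hf, rfl⟩)
  by_cases hk : k ≤ A.card
  · refine step_core S Γ c k (Γ ∪ Ew) r Set.subset_union_left hrc hrthick w tf A
      (fun f hf => ⟨(hw f (hAF hf)).1, fun f' hf' hne => (hw f (hAF hf)).2 f' (hAF hf') hne⟩)
      (fun f hf => hwΓ2 f (hAF hf))
      (fun f hf => htspec f (hAF hf)) hk true ?_
    intro f hf
    exact ⟨fun _ => hin f hf, fun hb => by simp at hb⟩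
  · have hcard2 : k ≤ (F \ A).card := by
      rw [Finset.card_sdiff_of_subset hAF, hcard]; omega
    refine step_core S Γ c k (Γ ∪ Ew) r Set.subset_union_left hrc hrthick w tf (F \ A)
      (fun f hf => ⟨(hw f (Finset.sdiff_subset hf)).1,
        fun f' hf' hne => (hw f (Finset.sdiff_subset hf)).2 f' (Finset.sdiff_subset hf') hne⟩)
      (fun f hf => hwΓ2 f (Finset.sdiff_subset hf))
      (fun f hf => htspec f (Finset.sdiff_subset hf)) hcard2 false ?_
    intro f hf
    refine ⟨fun hb => by simp at hb, fun _ => ?_⟩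
    have := Finset.mem_sdiff.1 hf
    exact hout f this.1 this.2

noncomputable def stepChoice (S : Set (Set Ω)) (hB : CondB S) (Γ c : Set Ω) (k : ℕ)
    (h : InfiniteBreadth (proj (avoid S Γ) c)) : StepOut S Γ c k :=
  Classical.choice (step_exists S hB Γ c k h)

noncomputable def chain (S : Set (Set Ω)) (hB : CondB S)
    (h0 : InfiniteBreadth (proj (avoid S (∅ : Set Ω)) univ)) :
    ℕ → Σ' p : Set Ω × Set Ω, InfiniteBreadth (proj (avoid S p.1) p.2)
  | 0 => ⟨(∅, univ), h0⟩
  | n + 1 =>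
    let prev := chain S hB h0 n
    let o := stepChoice S hB prev.1.1 prev.1.2 (n + 1) prev.2
    ⟨(o.Γ', o.c'), o.thick'⟩

noncomputable def ΓA (S : Set (Set Ω)) (hB : CondB S)
    (h0 : InfiniteBreadth (proj (avoid S (∅ : Set Ω)) univ)) (n : ℕ) : Set Ω :=
  (chain S hB h0 n).1.1

noncomputable def cA (S : Set (Set Ω)) (hB : CondB S)
    (h0 : InfiniteBreadth (proj (avoid S (∅ : Set Ω)) univ)) (n : ℕ) : Set Ω :=
  (chain S hB h0 n).1.2

noncomputable def outA (S : Set (Set Ω)) (hB : CondB S)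
    (h0 : InfiniteBreadth (proj (avoid S (∅ : Set Ω)) univ)) (n : ℕ) :
    StepOut S (ΓA S hB h0 n) (cA S hB h0 n) (n + 1) :=
  stepChoice S hB (ΓA S hB h0 n) (cA S hB h0 n) (n + 1) (chain S hB h0 n).2

lemma ΓA_succ (S : Set (Set Ω)) (hB : CondB S) (h0) (n : ℕ) :
    ΓA S hB h0 (n + 1) = (outA S hB h0 n).Γ' := rfl

lemma cA_succ (S : Set (Set Ω)) (hB : CondB S) (h0) (n : ℕ) :
    cA S hB h0 (n + 1) = (outA S hB h0 n).c' := rfl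

lemma ΓA_mono (S : Set (Set Ω)) (hB : CondB S) (h0) :
    ∀ {m n : ℕ}, m ≤ n → ΓA S hB h0 m ⊆ ΓA S hB h0 n := by
  intro m n hmn
  induction n, hmn using Nat.le_induction with
  | base => exact subset_rfl
  | succ n hmn ih =>
    refine ih.trans ?_
    rw [ΓA_succ]
    exact (outA S hB h0 n).Γmono

lemma cA_anti (S : Set (Set Ω)) (hB : CondB S) (h0) :
    ∀ {m n : ℕ}, m ≤ n → cA S hB h0 n ⊆ cA S hB h0 m := by
  intro m n hmn
  induction n, hmn using Nat.le_induction with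
  | base => exact subset_rfl
  | succ n hmn ih =>
    refine Set.Subset.trans ?_ ih
    rw [cA_succ]
    exact (outA S hB h0 n).cmono

end Machinery

/-- Infinite breadth plus Condition (B), with no spread realising `T_max`,
yields a spread realising `T_min`. -/
theorem stmt5 {Ω : Type*} (S : Set (Set Ω)) (hS : UnionClosed S)
    (hb : InfiniteBreadth S) (hB : CondB S)
    (hnomax : ∀ E : ℕ → Set Ω, IsSpread E → ¬ Tmax E ⊆ proj S (sjoin E)) :
    ∃ E : ℕ → Set Ω, IsSpread E ∧ Tmin E ⊆ proj S (sjoin E) := by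
  classical
  have h0 : InfiniteBreadth (proj (avoid S (∅ : Set Ω)) univ) := by
    intro n
    obtain ⟨F, hF, hcard, hinc⟩ := hb n
    refine ⟨F, ?_, hcard, hinc⟩
    intro f hf
    exact ⟨f, ⟨hF hf, by simp⟩, by simp⟩
  set bt : ℕ → Bool := fun n => (outA S hB h0 n).b with hbt
  have hbinf : ∃ b0 : Bool, {n | bt n = b0}.Infinite := by
    by_contra hcon
    push_neg at hcon
    have h1 : {n | bt n = true}.Finite := hcon true
    have h2 : {n | bt n = false}.Finite := hcon false
    have huniv : (Set.univ : Set ℕ).Finite := by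
      refine (h1.union h2).subset ?_
      intro n _
      cases hb' : bt n
      · exact Or.inr hb'
      · exact Or.inl hb'
    exact Set.infinite_univ huniv
  obtain ⟨b0, hMinf⟩ := hbinf
  have hpinf : {n | bt n = b0}.Infinite := hMinf
  set g : ℕ → ℕ := Nat.nth (fun n => bt n = b0) with hg
  have hgmono : StrictMono g := Nat.nth_strictMono hpinf
  have hbout : ∀ i, (outA S hB h0 (g i)).b = b0 := fun i =>
    Nat.nth_mem_of_infinite hpinf i
  set E : ℕ → Set Ω := fun i => (outA S hB h0 (g i)).W with hE
  set xi : ℕ → Ω → Set Ω := fun i => (outA S hB h0 (g i)).x with hxi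
  have hEfin : ∀ i, (E i).Finite := fun i => (outA S hB h0 (g i)).Wfin
  have hEcard : ∀ i, g i + 1 ≤ (E i).ncard := fun i => (outA S hB h0 (g i)).Wcard
  have hEc : ∀ i, E i ⊆ cA S hB h0 (g i) := fun i => (outA S hB h0 (g i)).Wc
  have hEΓsucc : ∀ i, E i ⊆ ΓA S hB h0 (g i + 1) := by
    intro i; rw [ΓA_succ]; exact (outA S hB h0 (g i)).WΓ'
  have hEΓ : ∀ i, E i ∩ ΓA S hB h0 (g i) = ∅ := fun i => (outA S hB h0 (g i)).WΓ
  have hdisj : ∀ i j, i < j → Disjoint (E i) (E j) := by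
    intro i j hij
    rw [Set.disjoint_left]
    intro q hqi hqj
    have h1 : q ∈ ΓA S hB h0 (g j) :=
      ΓA_mono S hB h0 (Nat.succ_le_of_lt (hgmono hij)) (hEΓsucc i hqi)
    have h2 : q ∈ E j ∩ ΓA S hB h0 (g j) := ⟨hqj, h1⟩
    rw [hEΓ j] at h2
    exact h2
  have hspread : IsSpread E := by
    refine ⟨hEfin, ?_, ?_, ?_⟩
    · intro i
      apply Set.nonempty_of_ncard_ne_zero
      have := hEcard i; omega
    · intro m n hmn
      rcases lt_or_gt_of_ne hmn with h | h
      · exact hdisj m n h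
      · exact (hdisj n m h).symm
    · refine tendsto_atTop_mono (fun i => ?_) (tendsto_add_atTop_nat 1)
      have hgi : i ≤ g i := hgmono.le_apply
      have := hEcard i
      omega
  have hxS : ∀ i, ∀ γ ∈ E i, xi i γ ∈ S := fun i γ hγ =>
    ((outA S hB h0 (g i)).hx γ hγ).1
  have hxeq : ∀ i, ∀ γ ∈ E i, xi i γ ∩ E i = {γ} := fun i γ hγ =>
    ((outA S hB h0 (g i)).hx γ hγ).2.2.1
  have hxself : ∀ i, ∀ γ ∈ E i, γ ∈ xi i γ := by
    intro i γ hγ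
    have h1 : γ ∈ xi i γ ∩ E i := by rw [hxeq i γ hγ]; exact rfl
    exact h1.1
  have hxlow : ∀ i j, j < i → ∀ γ ∈ E i, xi i γ ∩ E j = ∅ := by
    intro i j hji γ hγ
    have h1 : xi i γ ∩ ΓA S hB h0 (g i) = ∅ := ((outA S hB h0 (g i)).hx γ hγ).2.1
    apply Set.eq_empty_of_subset_empty
    intro q hq
    have h2 : q ∈ ΓA S hB h0 (g i) :=
      ΓA_mono S hB h0 (Nat.succ_le_of_lt (hgmono hji)) (hEΓsucc j hq.2)
    rw [← h1]
    exact ⟨hq.1, h2⟩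
  have hxhigh : ∀ i j, i < j → ∀ γ ∈ E i,
      (b0 = true → E j ⊆ xi i γ) ∧ (b0 = false → xi i γ ∩ E j = ∅) := by
    intro i j hij γ hγ
    have hcsub : E j ⊆ cA S hB h0 (g i + 1) :=
      (hEc j).trans (cA_anti S hB h0 (Nat.succ_le_of_lt (hgmono hij)))
    rw [cA_succ] at hcsub
    have hx := (outA S hB h0 (g i)).hx γ hγ
    constructor
    · intro hb
      exact hcsub.trans (hx.2.2.2.1 (by rw [hbout i, hb]))
    · intro hb
      have h1 := hx.2.2.2.2 (by rw [hbout i, hb])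
      apply Set.eq_empty_of_subset_empty
      intro q hq
      rw [← h1]
      exact ⟨hcsub hq.2, hq.1⟩
  cases b0 with
  | false =>
    exfalso
    apply hnomax E hspread
    rintro z ⟨i, a, haE, hane, rfl⟩
    have hafin : a.Finite := (hEfin i).subset haE
    set D : Set Ω := (⋃ k, ⋃ (_ : k < i), E k) ∪ a with hD
    have hDfin : D.Finite := by
      refine Set.Finite.union ?_ hafin
      have h1 : (⋃ k ∈ Set.Iio i, E k).Finite :=
        (Set.finite_Iio i).biUnion (fun k _ => hEfin k)
      exact h1
    set lvl : Ω → ℕ := fun q => if h : ∃ j, j < i ∧ q ∈ E j then h.choose else i with hlvl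
    have hlvlspec : ∀ q ∈ D, q ∈ E (lvl q) ∧ lvl q ≤ i ∧ (lvl q = i → q ∈ a) := by
      intro q hq
      by_cases h : ∃ j, j < i ∧ q ∈ E j
      · simp only [hlvl, dif_pos h]
        obtain ⟨hj1, hj2⟩ := h.choose_spec
        exact ⟨hj2, hj1.le, fun he => by omega⟩
      · simp only [hlvl, dif_neg h]
        have hqa : q ∈ a := by
          rcases hq with hq | hq
          · exfalso
            obtain ⟨k, hk⟩ := Set.mem_iUnion.1 hq
            obtain ⟨hki, hqk⟩ := Set.mem_iUnion.1 hk
            exact h ⟨k, hki, hqk⟩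
          · exact hq
        exact ⟨haE hqa, le_rfl, fun _ => hqa⟩
    have hDne : D.Nonempty := by
      obtain ⟨γ₀, hγ₀⟩ := hane
      exact ⟨γ₀, Or.inr hγ₀⟩
    set X : Set Ω := ⋃ q ∈ hDfin.toFinset, xi (lvl q) q with hX
    have hXS : X ∈ S := by
      refine unionClosed_biUnion hS _ ?_ _ ?_
      · rwa [Set.Finite.toFinset_nonempty]
      · intro q hq
        have hqD : q ∈ D := hDfin.mem_toFinset.1 hq
        exact hxS (lvl q) q (hlvlspec q hqD).1
    refine ⟨X, hXS, ?_⟩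
    show X ∩ sjoin E = D
    ext q'
    constructor
    · rintro ⟨hq'X, hq'sj⟩
      obtain ⟨m, hq'm⟩ := Set.mem_iUnion.1 hq'sj
      obtain ⟨q, hq, hq'x⟩ := Set.mem_iUnion₂.1 hq'X
      have hqD : q ∈ D := hDfin.mem_toFinset.1 hq
      obtain ⟨hqE, hli, hlia⟩ := hlvlspec q hqD
      rcases lt_trichotomy m (lvl q) with hm | hm | hm
      · exfalso
        have h1 : q' ∈ xi (lvl q) q ∩ E m := ⟨hq'x, hq'm⟩
        rw [hxlow (lvl q) m hm q hqE] at h1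
        exact h1
      · have h1 : q' ∈ xi (lvl q) q ∩ E (lvl q) := ⟨hq'x, hm ▸ hq'm⟩
        rw [hxeq (lvl q) q hqE] at h1
        rw [h1]
        exact hqD
      · exfalso
        have h1 : q' ∈ xi (lvl q) q ∩ E m := ⟨hq'x, hq'm⟩
        rw [((hxhigh (lvl q) m hm q hqE).2 rfl)] at h1
        exact h1
    · intro hq'D
      obtain ⟨hqE, _, _⟩ := hlvlspec q' hq'D
      constructor
      · exact Set.mem_iUnion₂.2 ⟨q', hDfin.mem_toFinset.2 hq'D, hxself (lvl q') q' hqE⟩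
      · exact Set.mem_iUnion.2 ⟨lvl q', hqE⟩
  | true =>
    refine ⟨E, hspread, ?_⟩
    rintro z ⟨i, a, haE, hane, rfl⟩
    have hafin : a.Finite := (hEfin i).subset haE
    have hane' : hafin.toFinset.Nonempty := by rwa [Set.Finite.toFinset_nonempty]
    set X : Set Ω := ⋃ γ ∈ hafin.toFinset, xi i γ with hX
    have hXS : X ∈ S :=
      unionClosed_biUnion hS _ hane' _
        (fun γ hγ => hxS i γ (haE (hafin.mem_toFinset.1 hγ)))
    refine ⟨X, hXS, ?_⟩
    show X ∩ sjoin E = a ∪ ⋃ k, ⋃ (_ : k > i), E k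
    ext q
    constructor
    · rintro ⟨hqX, hqsj⟩
      obtain ⟨m, hqm⟩ := Set.mem_iUnion.1 hqsj
      obtain ⟨γ, hγ, hqγ⟩ := Set.mem_iUnion₂.1 hqX
      have hγa : γ ∈ a := hafin.mem_toFinset.1 hγ
      rcases lt_trichotomy m i with hm | hm | hm
      · exfalso
        have h1 : q ∈ xi i γ ∩ E m := ⟨hqγ, hqm⟩
        rw [hxlow i m hm γ (haE hγa)] at h1
        exact h1
      · left
        have h1 : q ∈ xi i γ ∩ E i := ⟨hqγ, hm ▸ hqm⟩
        rw [hxeq i γ (haE hγa)] at h1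
        rw [h1]
        exact hγa
      · right
        exact Set.mem_iUnion.2 ⟨m, Set.mem_iUnion.2 ⟨hm, hqm⟩⟩
    · intro hq
      rcases hq with hqa | hqhi
      · exact ⟨Set.mem_iUnion₂.2 ⟨q, hafin.mem_toFinset.2 hqa, hxself i q (haE hqa)⟩,
          Set.mem_iUnion.2 ⟨i, haE hqa⟩⟩
      · obtain ⟨k, hk⟩ := Set.mem_iUnion.1 hqhi
        obtain ⟨hki, hqk⟩ := Set.mem_iUnion.1 hk
        obtain ⟨γ₀, hγ₀⟩ := hane
        refine ⟨?_, Set.mem_iUnion.2 ⟨k, hqk⟩⟩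
        exact Set.mem_iUnion₂.2 ⟨γ₀, hafin.mem_toFinset.2 hγ₀,
          (hxhigh i k hki γ₀ (haE hγ₀)).1 rfl hqk⟩
end

section
/- Let m, k ∈ ℕ and let x_1, …, x_{m+k} be pairwise distinct nonempty subsets of a set Ω such that the family {x_1, …, x_{m+k}} is incompressible. Set d = x_1 ∪ ⋯ ∪ x_m. Then the sets x_{m+1} \ d, …, x_{m+k} \ d are pairwise distinct and nonempty, and the family {x_{m+1} \ d, …, x_{m+k} \ d} is incompressible. -/
open Set Filter
open scoped Classical

variable {Ω : Type*}

/-- Removing the union of the first `m` sets from an incompressible family of `m + k`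
distinct nonempty sets leaves an incompressible family of `k` distinct nonempty sets. -/
theorem stmt6 {Ω : Type*} (m k : ℕ) (x : Fin (m + k) → Set Ω)
    (hinj : Function.Injective x) (hne : ∀ i, (x i).Nonempty)
    (hinc : Incompressible (Finset.univ.image x)) :
    Function.Injective
        (fun j : Fin k => x (Fin.natAdd m j) \ ⋃ i : Fin m, x (Fin.castAdd k i)) ∧
    (∀ j : Fin k,
        (x (Fin.natAdd m j) \ ⋃ i : Fin m, x (Fin.castAdd k i)).Nonempty) ∧
    Incompressible (Finset.univ.image
        (fun j : Fin k => x (Fin.natAdd m j) \ ⋃ i : Fin m, x (Fin.castAdd k i))) := by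
   -- begin proof
  classical
  set F : Finset (Set Ω) := Finset.univ.image x with hF
  -- witnesses
  have hwit : ∀ i : Fin (m + k), ∃ w, w ∈ x i ∧ ∀ i', i' ≠ i → w ∉ x i' := by
    intro i
    have hmem : x i ∈ F := Finset.mem_image_of_mem x (Finset.mem_univ i)
    have hss : F.erase (x i) ⊂ F := Finset.erase_ssubset hmem
    have hne' := hinc _ hss
    have hsub : ⋃₀ (↑(F.erase (x i)) : Set (Set Ω)) ⊆ ⋃₀ (↑F : Set (Set Ω)) := by
      apply Set.sUnion_subset_sUnion
      exact_mod_cast Finset.coe_subset.mpr hss.subset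
    obtain ⟨w, hw1, hw2⟩ := Set.exists_of_ssubset (hsub.ssubset_of_ne hne')
    obtain ⟨t, htF, hwt⟩ := hw1
    have key : ∀ y ∈ F, y ≠ x i → w ∉ y := by
      intro y hy hyne hwy
      exact hw2 ⟨y, Finset.mem_coe.mpr (Finset.mem_erase.mpr ⟨hyne, hy⟩), hwy⟩
    have hwxi : w ∈ x i := by
      by_contra h
      rcases Finset.mem_image.mp htF with ⟨i'', _, rfl⟩
      by_cases he : x i'' = x i
      · exact h (he ▸ hwt)
      · exact key _ htF he hwt
    refine ⟨w, hwxi, fun i' hne' hwy => ?_⟩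
    exact key (x i') (Finset.mem_image_of_mem x (Finset.mem_univ i'))
      (fun h => hne' (hinj h)) hwy
  choose w hw1 hw2 using hwit
  set d : Set Ω := ⋃ i : Fin m, x (Fin.castAdd k i) with hd
  set y : Fin k → Set Ω := fun j => x (Fin.natAdd m j) \ d with hy
  have hcn : ∀ (j : Fin k) (i : Fin m), Fin.castAdd k i ≠ Fin.natAdd m j := by
    intro j i h
    have := congrArg Fin.val h
    simp [Fin.castAdd, Fin.natAdd] at this
    omega
  have hwy : ∀ j : Fin k, w (Fin.natAdd m j) ∈ y j := by
    intro j
    refine ⟨hw1 _, ?_⟩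
    intro hmem
    rcases Set.mem_iUnion.mp hmem with ⟨i, hi⟩
    exact hw2 _ _ (hcn j i) hi
  have hyinj : Function.Injective y := by
    intro j j' hjj'
    have h1 : w (Fin.natAdd m j) ∈ x (Fin.natAdd m j') := (hjj' ▸ hwy j).1
    by_contra hne'
    exact hw2 _ _ (fun h => hne' (by
      have : (j : ℕ) = j' := by
        have := congrArg Fin.val h
        simp [Fin.natAdd] at this; omega
      exact Fin.ext this)) h1
  refine ⟨hyinj, fun j => ⟨_, hwy j⟩, ?_⟩
  intro G' hG' heq
  obtain ⟨t, htG, htG'⟩ := Finset.exists_of_ssubset hG'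
  rcases Finset.mem_image.mp htG with ⟨j, _, rfl⟩
  have hwj : w (Fin.natAdd m j) ∈ ⋃₀ (↑G' : Set (Set Ω)) := by
    rw [heq]
    exact ⟨y j, by exact_mod_cast htG, hwy j⟩
  rcases hwj with ⟨t', ht'G, hwt'⟩
  have ht'G2 := hG'.subset (by exact_mod_cast ht'G)
  rcases Finset.mem_image.mp ht'G2 with ⟨j', _, rfl⟩
  have : w (Fin.natAdd m j) ∈ x (Fin.natAdd m j') := hwt'.1
  by_cases h : Fin.natAdd m j' = Fin.natAdd m j
  · have : j' = j := by
      have := congrArg Fin.val h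
      simp [Fin.natAdd] at this
      exact Fin.ext (by omega)
    subst this
    exact htG' ht'G
  · exact hw2 _ _ h hwt'.1
end

section
/- Let S be a union-closed set system on a set Ω, and suppose there is a sequence (a_n)_{n≥1} of distinct members of S such that for each m ∈ ℕ the set {a_1, …, a_m} is incompressible. Then there exists a spread ℰ in Ω such that S ⊓ join(ℰ) contains T_max(ℰ). -/
open Set Filter
open scoped Classical

variable {Ω : Type*}

/-- Triangular numbers: `Tg n = 0 + 1 + ⋯ + n`. -/
def Tg : ℕ → ℕ
  | 0 => 0
  | n + 1 => Tg n + (n + 1)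

lemma Tg_mono : Monotone Tg :=
  monotone_nat_of_le_succ (fun n => by simp [Tg])

lemma Tg_lt (n k : ℕ) (hk : k ≤ n) : Tg n + k < Tg (n + 1) := by
  simp only [Tg]; omega

lemma Tg_inj {n k m l : ℕ} (hk : k ≤ n) (hl : l ≤ m) (h : Tg n + k = Tg m + l) :
    n = m ∧ k = l := by
  rcases lt_trichotomy n m with h1 | h1 | h1
  · have h2 := Tg_lt n k hk
    have h3 : Tg (n + 1) ≤ Tg m := Tg_mono h1
    omega
  · subst h1; omega
  · have h2 := Tg_lt m l hl
    have h3 : Tg (m + 1) ≤ Tg n := Tg_mono h1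
    omega

lemma unionClosed_biUnion_s7 {Ω : Type*} {S : Set (Set Ω)} (hS : UnionClosed S)
    {ι : Type*} (f : ι → Set Ω) :
    ∀ F : Finset ι, F.Nonempty → (∀ i ∈ F, f i ∈ S) → (⋃ i ∈ F, f i) ∈ S := by
  classical
  intro F
  induction F using Finset.induction_on with
  | empty => intro h; simp at h
  | @insert j F' hj ih =>
    intro _ hf
    rcases F'.eq_empty_or_nonempty with h | h
    · subst h; simpa using hf j (Finset.mem_insert_self _ _)
    · have h1 : (⋃ i ∈ F', f i) ∈ S := ih h (fun i hi => hf i (Finset.mem_insert_of_mem hi))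
      have h2 : f j ∈ S := hf j (Finset.mem_insert_self _ _)
      have := hS _ h2 _ h1
      simpa [Finset.set_biUnion_insert] using this

lemma witness_point {Ω : Type*} (a : ℕ → Set Ω) (hinj : Function.Injective a)
    (hinc : ∀ m : ℕ, Incompressible ((Finset.range m).image a))
    {j m : ℕ} (hj : j < m) :
    ∃ z, z ∈ a j ∧ ∀ i < m, i ≠ j → z ∉ a i := by
  classical
  set F := (Finset.range m).image a with hF
  have haj : a j ∈ F := Finset.mem_image_of_mem a (Finset.mem_range.mpr hj)
  have hss : F.erase (a j) ⊂ F := Finset.erase_ssubset haj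
  have hne := hinc m (F.erase (a j)) hss
  have hsubset : ⋃₀ (↑(F.erase (a j)) : Set (Set Ω)) ⊆ ⋃₀ (↑F : Set (Set Ω)) :=
    Set.sUnion_subset_sUnion (by exact_mod_cast Finset.erase_subset _ _)
  obtain ⟨z, hz1, hz2⟩ := Set.exists_of_ssubset (hsubset.ssubset_of_ne hne)
  obtain ⟨t, htF, hzt⟩ := hz1
  obtain ⟨i, hi, rfl⟩ := Finset.mem_image.mp htF
  have hzaj : z ∈ a j := by
    by_cases hij : i = j
    · subst hij; exact hzt
    · exfalso
      apply hz2
      exact ⟨a i, by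
        simp only [Finset.coe_erase, Set.mem_diff, Set.mem_singleton_iff]
        exact ⟨htF, fun h => hij (hinj h)⟩, hzt⟩
  refine ⟨z, hzaj, fun i' hi' hij' hzi' => hz2 ?_⟩
  exact ⟨a i', by
    simp only [Finset.coe_erase, Set.mem_diff, Set.mem_singleton_iff]
    exact ⟨Finset.mem_image_of_mem a (Finset.mem_range.mpr hi'), fun h => hij' (hinj h)⟩, hzi'⟩

/-- A nested sequence of incompressible sets yields a spread realising `T_max`. -/
theorem stmt7 {Ω : Type*} (S : Set (Set Ω)) (hS : UnionClosed S)
    (a : ℕ → Set Ω) (ha : ∀ n, a n ∈ S) (hinj : Function.Injective a)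
    (hinc : ∀ m : ℕ, Incompressible ((Finset.range m).image a)) :
    ∃ E : ℕ → Set Ω, IsSpread E ∧ Tmax E ⊆ proj S (sjoin E) := by
  classical
  have H : ∀ n k : ℕ, ∃ z : Ω, k ≤ n →
      z ∈ a (Tg n + k) ∧ ∀ i < Tg (n + 1), i ≠ Tg n + k → z ∉ a i := by
    intro n k
    by_cases hk : k ≤ n
    · obtain ⟨z, hz1, hz2⟩ := witness_point a hinj hinc (Tg_lt n k hk)
      exact ⟨z, fun _ => ⟨hz1, hz2⟩⟩
    · obtain ⟨z, _, _⟩ := witness_point a hinj hinc (show (0:ℕ) < 1 by norm_num)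
      exact ⟨z, fun h => absurd h hk⟩
  choose p hp using H
  have key : ∀ n k m l : ℕ, k ≤ n → l ≤ m → n ≤ m → ¬(n = m ∧ k = l) →
      p m l ∉ a (Tg n + k) := by
    intro n k m l hk hl hnm hne
    refine (hp m l hl).2 (Tg n + k) ?_ ?_
    · calc Tg n + k < Tg (n + 1) := Tg_lt n k hk
        _ ≤ Tg (m + 1) := Tg_mono (by omega)
    · intro h
      exact hne (Tg_inj hk hl h)
  have pdist : ∀ n k m l : ℕ, k ≤ n → l ≤ m → ¬(n = m ∧ k = l) → p n k ≠ p m l := by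
    intro n k m l hk hl hne heq
    rcases le_total n m with h | h
    · exact key n k m l hk hl h hne (heq ▸ (hp n k hk).1)
    · exact key m l n k hl hk h (fun hc => hne ⟨hc.1.symm, hc.2.symm⟩)
        (heq ▸ (hp m l hl).1)
  set E : ℕ → Set Ω := fun n => ↑((Finset.Iic n).image (p n)) with hEdef
  have hmemE : ∀ n z, z ∈ E n ↔ ∃ k ≤ n, p n k = z := by
    intro n z
    simp [hEdef, Finset.mem_image, Finset.mem_Iic]
  have hcard : ∀ n, (E n).ncard = n + 1 := by
    intro n
    rw [hEdef]
    rw [Set.ncard_coe_finset, Finset.card_image_of_injOn, Nat.card_Iic]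
    intro k hk l hl hkl
    by_contra hne
    exact pdist n k n l (Finset.mem_Iic.mp hk) (Finset.mem_Iic.mp hl)
      (fun hc => hne hc.2) hkl
  refine ⟨E, ⟨fun n => (Finset.Iic n |>.image (p n)).finite_toSet,
    fun n => ⟨p n 0, (hmemE n _).mpr ⟨0, Nat.zero_le n, rfl⟩⟩,
    fun m n hmn => ?_, ?_⟩, ?_⟩
  · rw [Set.disjoint_left]
    intro z hzm hzn
    obtain ⟨k, hk, rfl⟩ := (hmemE m z).mp hzm
    obtain ⟨l, hl, heq⟩ := (hmemE n _).mp hzn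
    exact pdist n l m k hl hk (fun hc => hmn hc.1.symm) heq
  · have : (fun n => (E n).ncard) = fun n => n + 1 := funext hcard
    rw [this]
    exact tendsto_add_atTop_nat 1
  · rintro x ⟨n, a', ha'sub, ⟨z0, hz0⟩, rfl⟩
    obtain ⟨k0, hk0, hpk0⟩ := (hmemE n z0).mp (ha'sub hz0)
    set Q : Finset (ℕ × ℕ) :=
      ((Finset.range (n + 1)) ×ˢ (Finset.range (n + 1))).filter
        (fun q => q.2 ≤ q.1 ∧ (q.1 < n ∨ p n q.2 ∈ a')) with hQdef
    have hQmem : ∀ q : ℕ × ℕ, q ∈ Q ↔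
        q.1 ≤ n ∧ q.2 ≤ q.1 ∧ (q.1 < n ∨ p n q.2 ∈ a') := by
      intro q
      simp only [hQdef, Finset.mem_filter, Finset.mem_product, Finset.mem_range]
      constructor
      · rintro ⟨⟨h1, _⟩, h3⟩; exact ⟨by omega, h3.1, h3.2⟩
      · rintro ⟨h1, h2, h3⟩; exact ⟨⟨by omega, by omega⟩, h2, h3⟩
    have hQne : Q.Nonempty :=
      ⟨(n, k0), (hQmem _).mpr ⟨le_refl n, hk0, Or.inr (hpk0 ▸ hz0)⟩⟩
    have hyS : (⋃ q ∈ Q, a (Tg q.1 + q.2)) ∈ S :=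
      unionClosed_biUnion_s7 hS _ Q hQne (fun q _ => ha _)
    refine ⟨⋃ q ∈ Q, a (Tg q.1 + q.2), hyS, ?_⟩
    ext z
    simp only [Set.mem_inter_iff, Set.mem_iUnion, Set.mem_union, exists_prop, sjoin]
    constructor
    · rintro ⟨⟨q, hqQ, hza⟩, m', hzm'⟩
      obtain ⟨hq1, hq2, hq3⟩ := (hQmem q).mp hqQ
      obtain ⟨l, hl, rfl⟩ := (hmemE m' _).mp hzm'
      by_cases hm' : m' < n
      · exact Or.inl ⟨m', hm', hzm'⟩
      · push_neg at hm'
        have heq : q.1 = m' ∧ q.2 = l := by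
          by_contra hc
          exact key q.1 q.2 m' l hq2 hl (le_trans hq1 hm') hc hza
        have hq1n : q.1 = n := le_antisymm hq1 (heq.1 ▸ hm')
        rcases hq3 with h | h
        · omega
        · right
          have : p m' l = p n q.2 := by rw [← heq.1, ← heq.2, hq1n]
          rw [this]; exact h
    · intro hz
      rcases hz with ⟨m, hm, hzm'⟩ | hz
      · obtain ⟨l, hl, rfl⟩ := (hmemE m _).mp hzm'
        exact ⟨⟨(m, l), (hQmem _).mpr ⟨by omega, hl, Or.inl hm⟩, (hp m l hl).1⟩,
          m, hzm'⟩
      · obtain ⟨l, hl, rfl⟩ := (hmemE n _).mp (ha'sub hz)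
        exact ⟨⟨(n, l), (hQmem _).mpr ⟨le_refl n, hl, Or.inr hz⟩, (hp n l hl).1⟩,
          n, (hmemE n _).mpr ⟨l, hl, rfl⟩⟩
end

section
/- Let Ω be an infinite set with the discrete topology, let ℰ be a spread in Ω, and let (a_j)_{j≥1} be a sequence of subsets of Ω that shatters ℰ. Let βΩ be the Stone–Čech compactification of Ω, and for a ⊆ Ω write cl(a) for the closure in βΩ of the canonical image of a. Then for every sequence (c_n)_{n≥1} of subsets of ℕ which separates points of ℕ (i.e. for all k ≠ l there is n with exactly one of k ∈ c_n and l ∈ c_n holding), there exists an injective sequence (γ_k)_{k≥1} of points of βΩ such that for all k, n ∈ ℕ: γ_k ∈ cl(a_n) if and only if k ∈ c_n; consequently cl(a_n) ∩ {γ_k : k ≥ 1} = {γ_k : k ∈ c_n} for every n. -/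
open Set Filter
open scoped Classical

variable {Ω : Type*}

/-- In the Stone–Čech compactification of a discrete space, the closures of the images of a set
and its complement are disjoint. -/
theorem aux_disj {Ω : Type*} [TopologicalSpace Ω] [DiscreteTopology Ω] (s : Set Ω)
    {z : StoneCech Ω} (h1 : z ∈ closure (stoneCechUnit '' s))
    (h2 : z ∈ closure (stoneCechUnit '' sᶜ)) : False := by
  classical
  set g : Ω → Bool := fun x => decide (x ∈ s) with hg
  have hgc : Continuous g := continuous_of_discreteTopology
  have hfc : Continuous (stoneCechExtend hgc) := continuous_stoneCechExtend hgc
  have key : ∀ x : Ω, stoneCechExtend hgc (stoneCechUnit x) = g x := fun x =>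
    congrFun (stoneCechExtend_extends hgc) x
  have hA : closure (stoneCechUnit '' s) ⊆ (stoneCechExtend hgc) ⁻¹' {true} := by
    apply closure_minimal
    · rintro _ ⟨x, hx, rfl⟩
      simp [key x, hg, hx]
    · exact (isClosed_discrete _).preimage hfc
  have hB : closure (stoneCechUnit '' sᶜ) ⊆ (stoneCechExtend hgc) ⁻¹' {false} := by
    apply closure_minimal
    · rintro _ ⟨x, hx, rfl⟩
      simp only [key x, hg, mem_preimage, mem_singleton_iff, decide_eq_false_iff_not]
      exact hx
    · exact (isClosed_discrete _).preimage hfc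
  have := hA h1
  have := hB h2
  simp_all

theorem aux_point {Ω : Type*} [TopologicalSpace Ω] [DiscreteTopology Ω] [Nonempty Ω]
    (a : ℕ → Set Ω) (y : ℕ → Set Ω)
    (hy : ∀ n, y n = a n ∨ y n = (a n)ᶜ)
    (hne : ∀ m : ℕ, (⋂ j < m, y j).Nonempty) :
    ∃ x : StoneCech Ω, ∀ n, (x ∈ closure (stoneCechUnit '' a n) ↔ y n = a n) := by
  classical
  set F : Filter Ω := ⨅ m : ℕ, 𝓟 (⋂ j < m, y j) with hF
  have hdir : Directed (· ≥ ·) fun m : ℕ => 𝓟 (⋂ j < m, y j) := by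
    intro m₁ m₂
    refine ⟨max m₁ m₂, principal_mono.2 ?_, principal_mono.2 ?_⟩ <;>
      · intro z hz
        simp only [mem_iInter] at hz ⊢
        exact fun j hj => hz j (by omega)
  have hFne : F.NeBot := iInf_neBot_of_directed hdir fun m => principal_neBot_iff.2 (hne m)
  set U : Ultrafilter Ω := Ultrafilter.of F with hU
  have hUF : (U : Filter Ω) ≤ F := Ultrafilter.of_le F
  have hyU : ∀ n, y n ∈ U := by
    intro n
    have h1 : F ≤ 𝓟 (⋂ j < n + 1, y j) := iInf_le _ (n + 1)
    have h2 : (⋂ j < n + 1, y j) ⊆ y n := biInter_subset_of_mem (Nat.lt_succ_self n)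
    exact hUF (h1 (mem_principal.2 h2))
  obtain ⟨x, -, hx⟩ := isCompact_univ.ultrafilter_le_nhds (U.map stoneCechUnit)
    (by simp [univ_mem])
  refine ⟨x, fun n => ?_⟩
  have himg : ∀ s : Set Ω, s ∈ U → x ∈ closure (stoneCechUnit '' s) := by
    intro s hs
    refine mem_closure_iff_ultrafilter.2 ⟨U.map stoneCechUnit, ?_, hx⟩
    exact Filter.image_mem_map hs
  rcases hy n with h | h
  · simp only [h, iff_true]
    exact himg _ (h ▸ hyU n)
  · constructor
    · intro hcl
      exfalso
      exact aux_disj (a n) hcl (himg _ (h ▸ hyU n))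
    · intro he
      exact himg _ (he ▸ hyU n)

/-- A sequence shattering a spread generates, in the Stone–Čech compactification,
a universal concrete semilattice. -/
theorem stmt8 {Ω : Type*} [TopologicalSpace Ω] [DiscreteTopology Ω] [Infinite Ω]
    (E : ℕ → Set Ω) (hE : IsSpread E)
    (a : ℕ → Set Ω) (ha : Shatters a E)
    (c : ℕ → Set ℕ)
    (hsep : ∀ k l : ℕ, k ≠ l →
      ∃ n, (k ∈ c n ∧ l ∉ c n) ∨ (k ∉ c n ∧ l ∈ c n)) :
    ∃ γ : ℕ → StoneCech Ω, Function.Injective γ ∧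
      (∀ k n : ℕ, γ k ∈ closure (stoneCechUnit '' a n) ↔ k ∈ c n) ∧
      ∀ n : ℕ, closure (stoneCechUnit '' a n) ∩ Set.range γ = γ '' c n := by
  classical
  -- for each k, choose a point
  have hpt : ∀ k : ℕ, ∃ x : StoneCech Ω,
      ∀ n, (x ∈ closure (stoneCechUnit '' a n) ↔ k ∈ c n) := by
    intro k
    set y : ℕ → Set Ω := fun n => if k ∈ c n then a n else (a n)ᶜ with hy
    have hy' : ∀ n, y n = a n ∨ y n = (a n)ᶜ := by
      intro n; by_cases h : k ∈ c n <;> simp [hy, h]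
    have hne : ∀ m : ℕ, (⋂ j < m, y j).Nonempty := by
      intro m
      have := ha m y (fun j _ => hy' j)
      have h1 := (this.eventually_ge_atTop 1).exists
      obtain ⟨n, hn⟩ := h1
      by_contra hcon
      rw [Set.not_nonempty_iff_eq_empty] at hcon
      have : E n ∩ ⋂ j < m, y j = ∅ := by rw [hcon]; exact inter_empty _
      simp [this] at hn
    obtain ⟨x, hx⟩ := aux_point a y hy' hne
    refine ⟨x, fun n => (hx n).trans ?_⟩
    by_cases h : k ∈ c n <;> simp [hy, h]
  choose γ hγ using hpt
  refine ⟨γ, ?_, hγ, ?_⟩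
  · intro k l hkl
    by_contra hne
    obtain ⟨n, h⟩ := hsep k l hne
    rcases h with ⟨h1, h2⟩ | ⟨h1, h2⟩
    · exact h2 ((hγ l n).1 (hkl ▸ (hγ k n).2 h1))
    · exact h1 ((hγ k n).1 (hkl ▸ (hγ l n).2 h2))
  · intro n
    ext z
    constructor
    · rintro ⟨hz, k, rfl⟩
      exact ⟨k, (hγ k n).1 hz, rfl⟩
    · rintro ⟨k, hk, rfl⟩
      exact ⟨(hγ k n).2 hk, k, rfl⟩
end

section
/- Let S be a union-closed set system on a set Ω, let ℰ = (E_n)_{n≥1} be a spread in Ω, and let 𝒞 be a finite partition of Ω that colours ℰ. Then at least one of the following holds: (a) there exist an infinite set N ⊆ ℕ and a member y ∈ S such that y halves C with respect to (E_n)_{n∈N} for every C ∈ 𝒞; or (b) there exists a spread F refining ℰ such that 𝒞 colours F and is S-decisive for F. -/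
open Set Filter
open scoped Classical

variable {Ω : Type*}

-- auxiliary lemmas to be inserted before stmt11

private lemma aux_seq {Q : ℕ → ℕ → Prop} (h : ∀ j m, ∃ n, m < n ∧ Q j n) :
    ∃ τ : ℕ → ℕ, StrictMono τ ∧ ∀ j, Q j (τ j) := by
  choose f hlt hQ using h
  set τ : ℕ → ℕ := fun j => Nat.rec (f 0 0) (fun j ih => f (j + 1) ih) j with hτ
  have hsucc : ∀ j, τ (j + 1) = f (j + 1) (τ j) := fun j => rfl
  refine ⟨τ, strictMono_nat_of_lt_succ fun j => ?_, fun j => ?_⟩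
  · rw [hsucc]; exact hlt (j + 1) (τ j)
  · cases j with
    | zero => exact hQ 0 0
    | succ j => rw [hsucc]; exact hQ (j + 1) (τ j)

private lemma aux_tendsto_of_le {g : ℕ → ℕ} (h : ∀ j, j ≤ g j) :
    Tendsto g atTop atTop :=
  tendsto_atTop_mono h tendsto_id

private lemma aux_tendsto_subseq {f : ℕ → ℕ} {σ : ℕ → ℕ} (hσ : StrictMono σ)
    (h : Tendsto (fun j => f (σ j)) atTop atTop) :
    Tendsto f (atTop ⊓ 𝓟 (Set.range σ)) atTop := by
  rw [tendsto_atTop] at h ⊢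
  intro b
  obtain ⟨k, hk⟩ := eventually_atTop.1 (h b)
  rw [eventually_inf_principal]
  filter_upwards [eventually_ge_atTop (σ k)] with n hn hmem
  obtain ⟨j, rfl⟩ := hmem
  exact hk j (hσ.le_iff_le.1 hn)

private lemma aux_key {Ω : Type*} (S : Set (Set Ω)) (hS : UnionClosed S)
    (E : ℕ → Set Ω) (hE : IsSpread E)
    (C : Finset (Set Ω)) (hC : IsPartitionC C) (hcol : Colours C E)
    (hnb : ∀ F : ℕ → Set Ω, Refines F E → Colours C F → ¬ Decisive S C F) :
    ∀ D : Finset (Set Ω), D ⊆ C →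
      ∃ (σ : ℕ → ℕ) (u : Set Ω), StrictMono σ ∧ u ∈ insert (∅ : Set Ω) S ∧
        (∀ c ∈ D, Tendsto (fun j => (u ∩ c ∩ E (σ j)).ncard) atTop atTop) ∧
        (∀ c ∈ C, Tendsto (fun j => (uᶜ ∩ c ∩ E (σ j)).ncard) atTop atTop) := by
  intro D
  induction D using Finset.induction_on with
  | empty =>
    intro _
    refine ⟨id, ∅, strictMono_id, Set.mem_insert _ _, by simp, fun c hc => ?_⟩
    have := hcol c hc
    simpa [Set.compl_empty, Set.univ_inter] using this
  | @insert c' D hc'D ih =>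
    intro hsub
    have hc'C : c' ∈ C := hsub (Finset.mem_insert_self _ _)
    have hDC : D ⊆ C := fun d hd => hsub (Finset.mem_insert_of_mem hd)
    obtain ⟨σ, u, hσ, hu, hD, hall⟩ := ih hDC
    -- C is nonempty
    obtain ⟨ω, hω⟩ := hE.2.1 0
    have hωC : ω ∈ ⋃₀ (↑C : Set (Set Ω)) := hC.2 ▸ Set.mem_univ ω
    obtain ⟨c₀, hc₀C, -⟩ := hωC
    have hc₀ : c₀ ∈ C := hc₀C
    -- choose n₀ so that uᶜ ∩ c₀ ∩ E (σ j) is nonempty for j ≥ n₀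
    obtain ⟨n₀, hn₀⟩ := eventually_atTop.1 ((tendsto_atTop.1 (hall c₀ hc₀)) 1)
    -- the auxiliary spread G
    set G : ℕ → Set Ω := fun j => uᶜ ∩ E (σ (j + n₀)) with hG
    have hGfin : ∀ j, (G j).Finite := fun j => (hE.1 _).subset Set.inter_subset_right
    have hsubG : ∀ j, uᶜ ∩ c₀ ∩ E (σ (j + n₀)) ⊆ G j := by
      rintro j y ⟨⟨h1, h2⟩, h3⟩; exact ⟨h1, h3⟩
    have hGcard : ∀ j, 1 ≤ (G j).ncard := by
      intro j
      exact le_trans (hn₀ (j + n₀) (Nat.le_add_left _ _))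
        (Set.ncard_le_ncard (hsubG j) (hGfin j))
    have hGne : ∀ j, (G j).Nonempty := by
      intro j
      exact Set.nonempty_of_ncard_ne_zero (by have := hGcard j; omega)
    have hmono : StrictMono fun j => σ (j + n₀) :=
      hσ.comp fun a b hab => by omega
    have hGdisj : ∀ m n, m ≠ n → Disjoint (G m) (G n) := by
      intro m n hmn
      exact Disjoint.mono Set.inter_subset_right Set.inter_subset_right
        (hE.2.2.1 _ _ (fun h => hmn (by
          have := hmono.injective h; omega)))
    have haux : ∀ c, c ∈ C → Tendsto (fun j => (uᶜ ∩ c ∩ E (σ (j + n₀))).ncard) atTop atTop := by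
      intro c hc
      exact (hall c hc).comp (aux_tendsto_of_le fun j => Nat.le_add_right _ _)
    have hGbig : Tendsto (fun j => (G j).ncard) atTop atTop := by
      apply tendsto_atTop_mono _ (haux c₀ hc₀)
      intro j
      exact Set.ncard_le_ncard (hsubG j) (hGfin j)
    have hGspread : IsSpread G := ⟨hGfin, hGne, hGdisj, hGbig⟩
    have hGref : Refines G E :=
      ⟨hGspread, fun j => σ (j + n₀), hmono.injective, fun j => Set.inter_subset_right⟩
    have hGcol : Colours C G := by
      intro c hc
      have h1 : ∀ j, c ∩ G j = uᶜ ∩ c ∩ E (σ (j + n₀)) := by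
        intro j
        rw [hG]
        ext y
        simp only [Set.mem_inter_iff, Set.mem_compl_iff]
        tauto
      simpa only [h1] using haux c hc
    have hdec := hnb G hGref hGcol
    rw [Decisive] at hdec
    push_neg at hdec
    obtain ⟨x, hxS, hx⟩ := hdec c' hc'C
    -- extract a strictly monotone sequence of witnesses
    have hQ : ∀ j m, ∃ n, m < n ∧ (j < (x ∩ c' ∩ G n).ncard ∧
        ∀ c ∈ C, j < (xᶜ ∩ c ∩ G n).ncard) := by
      intro j m
      obtain ⟨n, h1, h2⟩ := hx (max j ((Finset.range (m + 1)).sup fun k => (G k).ncard))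
      refine ⟨n, ?_, lt_of_le_of_lt (le_max_left _ _) h1,
        fun c hc => lt_of_le_of_lt (le_max_left _ _) (h2 c hc)⟩
      by_contra hnm
      push_neg at hnm
      have hle : (x ∩ c' ∩ G n).ncard ≤ (G n).ncard :=
        Set.ncard_le_ncard Set.inter_subset_right (hGfin n)
      have hle2 : (G n).ncard ≤ (Finset.range (m + 1)).sup fun k => (G k).ncard :=
        Finset.le_sup (f := fun k => (G k).ncard) (Finset.mem_range.2 (by omega))
      have := lt_of_le_of_lt (le_max_right j _) h1
      omega
    obtain ⟨τ, hτ, hτQ⟩ := aux_seq hQ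
    refine ⟨fun j => σ (τ j + n₀), u ∪ x, hσ.comp (hτ.add_const n₀), ?_, ?_, ?_⟩
    · rcases Set.mem_insert_iff.1 hu with h | h
      · subst h
        simpa using Set.mem_insert_of_mem _ hxS
      · exact Set.mem_insert_of_mem _ (hS u h x hxS)
    · intro c hc
      rcases Finset.mem_insert.1 hc with rfl | hc
      · -- c = c'
        show Tendsto (fun j => ((u ∪ x) ∩ c ∩ E (σ (τ j + n₀))).ncard) atTop atTop
        apply aux_tendsto_of_le
        intro j
        have hsub : x ∩ c ∩ G (τ j) ⊆ (u ∪ x) ∩ c ∩ E (σ (τ j + n₀)) := by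
          rintro y ⟨⟨h1, h2⟩, h3, h4⟩
          exact ⟨⟨Or.inr h1, h2⟩, h4⟩
        have := Set.ncard_le_ncard hsub ((hE.1 _).subset Set.inter_subset_right)
        have h2 := (hτQ j).1
        omega
      · -- c ∈ D
        show Tendsto (fun j => ((u ∪ x) ∩ c ∩ E (σ (τ j + n₀))).ncard) atTop atTop
        have h1 : Tendsto (fun j => (u ∩ c ∩ E (σ (τ j + n₀))).ncard) atTop atTop :=
          (hD c hc).comp (aux_tendsto_of_le fun j => le_trans (hτ.le_apply) (Nat.le_add_right _ _))
        apply tendsto_atTop_mono _ h1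
        intro j
        apply Set.ncard_le_ncard _ ((hE.1 _).subset Set.inter_subset_right)
        rintro y ⟨⟨h1, h2⟩, h3⟩
        exact ⟨⟨Or.inl h1, h2⟩, h3⟩
    · intro c hc
      show Tendsto (fun j => ((u ∪ x)ᶜ ∩ c ∩ E (σ (τ j + n₀))).ncard) atTop atTop
      apply aux_tendsto_of_le
      intro j
      have hsub : xᶜ ∩ c ∩ G (τ j) ⊆ (u ∪ x)ᶜ ∩ c ∩ E (σ (τ j + n₀)) := by
        rintro y ⟨⟨h1, h2⟩, h3, h4⟩
        refine ⟨⟨fun hy => ?_, h2⟩, h4⟩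
        rcases hy with hy | hy
        · exact h3 hy
        · exact h1 hy
      have := Set.ncard_le_ncard hsub ((hE.1 _).subset Set.inter_subset_right)
      have h2 := (hτQ j).2 c hc
      omega

/-- Inductive step lemma: either some member of `S` halves every colour class along a
subsequence, or the colouring is decisive on a refinement. -/
theorem stmt11 {Ω : Type*} (S : Set (Set Ω)) (hS : UnionClosed S)
    (E : ℕ → Set Ω) (hE : IsSpread E)
    (C : Finset (Set Ω)) (hC : IsPartitionC C) (hcol : Colours C E) :
    (∃ N : Set ℕ, N.Infinite ∧ ∃ y ∈ S, ∀ c ∈ C, Halves y c E N) ∨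
    (∃ F : ℕ → Set Ω, Refines F E ∧ Colours C F ∧ Decisive S C F) := by
  by_cases hb : ∃ F : ℕ → Set Ω, Refines F E ∧ Colours C F ∧ Decisive S C F
  · exact Or.inr hb
  · push_neg at hb
    left
    obtain ⟨σ, u, hσ, hu, hD, hall⟩ := aux_key S hS E hE C hC hcol hb C (subset_refl _)
    -- C is nonempty
    obtain ⟨ω, hω⟩ := hE.2.1 0
    have hωC : ω ∈ ⋃₀ (↑C : Set (Set Ω)) := hC.2 ▸ Set.mem_univ ω
    obtain ⟨c₀, hc₀C, -⟩ := hωC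
    have hc₀ : c₀ ∈ C := hc₀C
    have huS : u ∈ S := by
      rcases Set.mem_insert_iff.1 hu with h | h
      · exfalso
        have h1 := hD c₀ hc₀
        rw [h] at h1
        simp only [Set.empty_inter, Set.ncard_empty] at h1
        obtain ⟨k, hk⟩ := eventually_atTop.1 (tendsto_atTop.1 h1 1)
        exact absurd (hk k le_rfl) (by norm_num)
      · exact h
    refine ⟨Set.range σ, Set.infinite_range_of_injective hσ.injective, u, huS, fun c hc => ?_⟩
    constructor
    · have h1 : (fun n => (c ∩ u ∩ E n).ncard) = fun n => (u ∩ c ∩ E n).ncard := by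
        funext n; rw [Set.inter_comm c u]
      rw [h1]
      exact aux_tendsto_subseq hσ (hD c hc)
    · have h1 : (fun n => ((c \ u) ∩ E n).ncard) = fun n => (uᶜ ∩ c ∩ E n).ncard := by
        funext n
        congr 1
        rw [Set.diff_eq, Set.inter_comm c uᶜ]
      rw [h1]
      exact aux_tendsto_subseq hσ (hall c hc)
end

section
/- Let 𝒮 be a union-closed set system on a set Ω and let 𝒮' be a union-closed set system on a set Ω', and suppose there is a bijection φ : 𝒮 → 𝒮' satisfying φ(x ∪ y) = φ(x) ∪ φ(y) for all x, y ∈ 𝒮 (so 𝒮 and 𝒮' are isomorphic semilattices). If there exists a spread ℰ in Ω such that 𝒮 ⊓ join(ℰ) contains T_max(ℰ), then there exists a spread ℰ' in Ω' such that 𝒮' ⊓ join(ℰ') contains T_max(ℰ'). -/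
open Set Filter
open scoped Classical

variable {Ω : Type*}

section Aux13

variable {Ω : Type*}

lemma aux_biUnion_mem {S : Set (Set Ω)} (hS : UnionClosed S) {ι : Type*} {t : Set ι}
    (ht : t.Finite) {f : ι → Set Ω} :
    (∀ i ∈ t, f i ∈ S) → t.Nonempty → (⋃ i ∈ t, f i) ∈ S := by
  refine Set.Finite.induction_on _ ht (fun _ h => absurd h (by simp)) ?_
  rintro a s ha hs ih hf -
  rw [Set.biUnion_insert]
  rcases s.eq_empty_or_nonempty with rfl | hsne
  · simpa using hf a (Set.mem_insert _ _)
  · exact hS _ (hf a (Set.mem_insert _ _)) _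
      (ih (fun i hi => hf i (Set.mem_insert_of_mem _ hi)) hsne)

/-- Auxiliary: union of the chosen witnesses at levels below `n`. -/
def LL (E : ℕ → Set Ω) (X : ℕ → Set Ω → Set Ω) (n : ℕ) : Set Ω :=
  ⋃ m, ⋃ _ : m < n, ⋃ e ∈ E m, X m {e}

/-- Auxiliary: canonical element of `S` whose trace on the join is `E_{<n} ∪ a`. -/
def YY (E : ℕ → Set Ω) (X : ℕ → Set Ω → Set Ω) (n : ℕ) (a : Set Ω) : Set Ω :=
  LL E X n ∪ ⋃ e ∈ a, X n {e}

variable {S : Set (Set Ω)} {E : ℕ → Set Ω} {X : ℕ → Set Ω → Set Ω}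

lemma LL_mono {m n : ℕ} (h : m ≤ n) : LL E X m ⊆ LL E X n := by
  intro x hx
  simp only [LL, Set.mem_iUnion] at hx ⊢
  obtain ⟨k, hk, hx⟩ := hx
  exact ⟨k, hk.trans_le h, hx⟩

lemma YY_subset_LL {m n : ℕ} (h : m < n) {a : Set Ω} (ha : a ⊆ E m) :
    YY E X m a ⊆ LL E X n := by
  apply Set.union_subset (LL_mono h.le)
  intro x hx
  simp only [Set.mem_iUnion] at hx
  obtain ⟨e, he, hx⟩ := hx
  simp only [LL, Set.mem_iUnion]
  exact ⟨m, h, e, ha he, hx⟩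

lemma YY_mono {n : ℕ} {a b : Set Ω} (h : a ⊆ b) : YY E X n a ⊆ YY E X n b :=
  Set.union_subset_union_right _ (Set.biUnion_subset_biUnion_left h)

lemma YY_union {n : ℕ} (a b : Set Ω) : YY E X n a ∪ YY E X n b = YY E X n (a ∪ b) := by
  ext x
  simp only [YY, Set.mem_union, Set.mem_iUnion]
  constructor
  · rintro ((h | ⟨e, he, h⟩) | (h | ⟨e, he, h⟩))
    · exact Or.inl h
    · exact Or.inr ⟨e, Or.inl he, h⟩
    · exact Or.inl h
    · exact Or.inr ⟨e, Or.inr he, h⟩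
  · rintro (h | ⟨e, (he | he), h⟩)
    · exact Or.inl (Or.inl h)
    · exact Or.inl (Or.inr ⟨e, he, h⟩)
    · exact Or.inr (Or.inr ⟨e, he, h⟩)

lemma YY_mem (hS : UnionClosed S) (hfinE : ∀ n, (E n).Finite) (hEne : ∀ n, (E n).Nonempty)
    (hXmem : ∀ n e, e ∈ E n → X n {e} ∈ S) {n : ℕ} {a : Set Ω}
    (ha : a ⊆ E n) (hane : a.Nonempty) : YY E X n a ∈ S := by
  have hA : (⋃ e ∈ a, X n {e}) ∈ S :=
    aux_biUnion_mem hS ((hfinE n).subset ha) (fun e he => hXmem n e (ha he)) hane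
  have hL : ∀ m, LL E X m = ∅ ∨ LL E X m ∈ S := by
    intro m
    induction m with
    | zero => left; simp [LL]
    | succ m ih =>
      right
      have hsucc : LL E X (m + 1) = LL E X m ∪ ⋃ e ∈ E m, X m {e} := by
        simp only [LL]
        exact Set.biUnion_lt_succ _ _
      rw [hsucc]
      have hm : (⋃ e ∈ E m, X m {e}) ∈ S :=
        aux_biUnion_mem hS (hfinE m) (fun e he => hXmem m e he) (hEne m)
      rcases ih with h | h
      · rw [h, Set.empty_union]; exact hm
      · exact hS _ h _ hm
  rcases hL n with h | h
  · rw [YY, h, Set.empty_union]; exact hA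
  · exact hS _ h _ hA

lemma YY_cap
    (hXcap : ∀ n e, e ∈ E n → X n {e} ∩ sjoin E = (⋃ k, ⋃ _ : k < n, E k) ∪ {e})
    {n : ℕ} {a : Set Ω} (ha : a ⊆ E n) :
    YY E X n a ∩ sjoin E = (⋃ k, ⋃ _ : k < n, E k) ∪ a := by
  ext ω
  constructor
  · rintro ⟨hω, hj⟩
    rcases hω with hω | hω
    · simp only [LL, Set.mem_iUnion] at hω
      obtain ⟨m, hm, e, he, hω⟩ := hω
      have h2 : ω ∈ (⋃ k, ⋃ _ : k < m, E k) ∪ {e} := by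
        rw [← hXcap m e he]; exact ⟨hω, hj⟩
      rcases h2 with h2 | h2
      · left
        simp only [Set.mem_iUnion] at h2 ⊢
        obtain ⟨k, hk, h2⟩ := h2
        exact ⟨k, hk.trans hm, h2⟩
      · left
        rw [Set.mem_singleton_iff] at h2
        subst h2
        simp only [Set.mem_iUnion]
        exact ⟨m, hm, he⟩
    · simp only [Set.mem_iUnion] at hω
      obtain ⟨e, he, hω⟩ := hω
      have h2 : ω ∈ (⋃ k, ⋃ _ : k < n, E k) ∪ {e} := by
        rw [← hXcap n e (ha he)]; exact ⟨hω, hj⟩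
      rcases h2 with h2 | h2
      · exact Or.inl h2
      · rw [Set.mem_singleton_iff] at h2
        subst h2
        exact Or.inr he
  · intro hω
    rcases hω with hω | hω
    · simp only [Set.mem_iUnion] at hω
      obtain ⟨k, hk, hω⟩ := hω
      have h1 : ω ∈ X k {ω} ∩ sjoin E := by
        rw [hXcap k ω hω]
        exact Or.inr rfl
      refine ⟨Or.inl ?_, h1.2⟩
      simp only [LL, Set.mem_iUnion]
      exact ⟨k, hk, ω, hω, h1.1⟩
    · have h1 : ω ∈ X n {ω} ∩ sjoin E := by
        rw [hXcap n ω (ha hω)]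
        exact Or.inr rfl
      refine ⟨Or.inr ?_, h1.2⟩
      simp only [Set.mem_iUnion]
      exact ⟨ω, hω, h1.1⟩

end Aux13

/-- Persistence of `T_max` across isomorphic concrete representations. -/
theorem stmt13 {Ω Ω' : Type*} (S : Set (Set Ω)) (S' : Set (Set Ω'))
    (hS : UnionClosed S) (hS' : UnionClosed S')
    (φ : Set Ω → Set Ω') (hbij : Set.BijOn φ S S')
    (hhom : ∀ x ∈ S, ∀ y ∈ S, φ (x ∪ y) = φ x ∪ φ y)
    (h : ∃ E : ℕ → Set Ω, IsSpread E ∧ Tmax E ⊆ proj S (sjoin E)) :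
    ∃ E' : ℕ → Set Ω', IsSpread E' ∧ Tmax E' ⊆ proj S' (sjoin E') := by
  classical
  obtain ⟨E, ⟨hfinE, hEne, hdisj, htend⟩, hT⟩ := h
  obtain ⟨N, hN⟩ := Filter.eventually_atTop.mp (htend.eventually_ge_atTop 2)
  -- choose, for each `(n, a)`, an element of `S` whose trace on the join is `E_{<n} ∪ a`
  have hT' : ∀ (n : ℕ) (a : Set Ω), ∃ x, a ⊆ E n → a.Nonempty →
      x ∈ S ∧ x ∩ sjoin E = (⋃ k, ⋃ _ : k < n, E k) ∪ a := by
    intro n a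
    by_cases h1 : a ⊆ E n ∧ a.Nonempty
    · obtain ⟨x, hxS, hx⟩ := hT ⟨n, a, h1.1, h1.2, rfl⟩
      exact ⟨x, fun _ _ => ⟨hxS, hx⟩⟩
    · exact ⟨∅, fun hs hn => absurd ⟨hs, hn⟩ h1⟩
  choose X hX using hT'
  have hXmem : ∀ n e, e ∈ E n → X n {e} ∈ S := fun n e he =>
    (hX n {e} (Set.singleton_subset_iff.mpr he) (Set.singleton_nonempty e)).1
  have hXcap : ∀ n e, e ∈ E n → X n {e} ∩ sjoin E = (⋃ k, ⋃ _ : k < n, E k) ∪ {e} :=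
    fun n e he => (hX n {e} (Set.singleton_subset_iff.mpr he) (Set.singleton_nonempty e)).2
  have hYmem : ∀ {n : ℕ} {a : Set Ω}, a ⊆ E n → a.Nonempty → YY E X n a ∈ S :=
    fun ha hane => YY_mem hS hfinE hEne hXmem ha hane
  have hYcap : ∀ {n : ℕ} {a : Set Ω}, a ⊆ E n →
      YY E X n a ∩ sjoin E = (⋃ k, ⋃ _ : k < n, E k) ∪ a :=
    fun ha => YY_cap hXcap ha
  have hφS : ∀ {x : Set Ω}, x ∈ S → φ x ∈ S' := fun hx => hbij.mapsTo hx
  have hφmono : ∀ {x y : Set Ω}, x ∈ S → y ∈ S → x ⊆ y → φ x ⊆ φ y := by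
    intro x y hx hy hxy
    have h1 := hhom x hx y hy
    rw [Set.union_eq_self_of_subset_left hxy] at h1
    rw [h1]
    exact Set.subset_union_left
  have hdiffne : ∀ {n : ℕ}, N ≤ n → ∀ {e : Ω}, e ∈ E n → (E n \ {e}).Nonempty := by
    intro n hn e he
    obtain ⟨x, y, hxE, hyE, hxy⟩ :=
      (Set.one_lt_ncard_iff (hfinE n)).mp (lt_of_lt_of_le one_lt_two (hN n hn))
    by_cases hxe : x = e
    · exact ⟨y, hyE, by simp [hxe ▸ hxy.symm]⟩
    · exact ⟨x, hxE, by simp [hxe]⟩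
  -- the key non-inclusion, using injectivity of φ
  have hkey : ∀ {n : ℕ}, N ≤ n → ∀ {e : Ω}, e ∈ E n →
      ¬ φ (YY E X n {e}) ⊆ φ (YY E X n (E n \ {e})) := by
    intro n hn e he hsub
    have hd := hdiffne hn he
    have hdE : E n \ {e} ⊆ E n := Set.diff_subset
    have h1 : φ (YY E X n {e}) ∪ φ (YY E X n (E n \ {e})) = φ (YY E X n (E n)) := by
      rw [← hhom _ (hYmem (Set.singleton_subset_iff.mpr he) (Set.singleton_nonempty e))
        _ (hYmem hdE hd)]
      rw [YY_union]
      congr 2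
      rw [Set.singleton_union, Set.insert_diff_singleton, Set.insert_eq_self.mpr he]
    rw [Set.union_eq_self_of_subset_left hsub] at h1
    have h2 : YY E X n (E n \ {e}) = YY E X n (E n) :=
      hbij.injOn (hYmem hdE hd) (hYmem subset_rfl (hEne n)) h1
    have h3 := hYcap hdE
    rw [h2, hYcap (subset_rfl : E n ⊆ E n)] at h3
    have h5 : e ∈ (⋃ k, ⋃ _ : k < n, E k) ∪ (E n \ {e}) := h3 ▸ Or.inr he
    rcases h5 with h5 | h5
    · simp only [Set.mem_iUnion] at h5
      obtain ⟨k, hk, h5⟩ := h5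
      exact Set.disjoint_left.mp (hdisj k n hk.ne) h5 he
    · exact h5.2 rfl
  -- a default point of Ω'
  obtain ⟨e₀, he₀⟩ := hEne N
  obtain ⟨w₀, _, _⟩ := Set.not_subset.mp (hkey le_rfl he₀)
  -- choose witness points
  have hWex : ∀ (n : ℕ) (e : Ω), ∃ w : Ω', N ≤ n → e ∈ E n →
      w ∈ φ (YY E X n {e}) ∧ w ∉ φ (YY E X n (E n \ {e})) := by
    intro n e
    by_cases h1 : N ≤ n ∧ e ∈ E n
    · obtain ⟨w, hw1, hw2⟩ := Set.not_subset.mp (hkey h1.1 h1.2)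
      exact ⟨w, fun _ _ => ⟨hw1, hw2⟩⟩
    · exact ⟨w₀, fun ha hb => absurd ⟨ha, hb⟩ h1⟩
  choose W hW using hWex
  have hWin : ∀ {n : ℕ}, N ≤ n → ∀ {e : Ω}, e ∈ E n → ∀ {a : Set Ω}, a ⊆ E n → e ∈ a →
      W n e ∈ φ (YY E X n a) := by
    intro n hn e he a ha hea
    exact hφmono (hYmem (Set.singleton_subset_iff.mpr he) (Set.singleton_nonempty e))
      (hYmem ha ⟨e, hea⟩) (YY_mono (Set.singleton_subset_iff.mpr hea)) (hW n e hn he).1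
  have hWout : ∀ {n : ℕ}, N ≤ n → ∀ {e : Ω}, e ∈ E n → ∀ {a : Set Ω}, a ⊆ E n → e ∉ a →
      a.Nonempty → W n e ∉ φ (YY E X n a) := by
    intro n hn e he a ha hea hane hcon
    apply (hW n e hn he).2
    have hsub : a ⊆ E n \ {e} := fun x hx =>
      ⟨ha hx, by simp only [Set.mem_singleton_iff]; rintro rfl; exact hea hx⟩
    exact hφmono (hYmem ha hane) (hYmem Set.diff_subset (hdiffne hn he)) (YY_mono hsub) hcon
  have hWup : ∀ {m n : ℕ}, N ≤ m → m < n → ∀ {e : Ω}, e ∈ E m → ∀ {b : Set Ω}, b ⊆ E n →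
      b.Nonempty → W m e ∈ φ (YY E X n b) := by
    intro m n hm hmn e he b hb hbne
    have h1 : YY E X m {e} ⊆ YY E X n b :=
      (YY_subset_LL hmn (Set.singleton_subset_iff.mpr he)).trans Set.subset_union_left
    exact hφmono (hYmem (Set.singleton_subset_iff.mpr he) (Set.singleton_nonempty e))
      (hYmem hb hbne) h1 (hW m e hm he).1
  have hWdown : ∀ {n k : ℕ}, N ≤ k → n < k → ∀ {f : Ω}, f ∈ E k → ∀ {b : Set Ω}, b ⊆ E n →
      b.Nonempty → W k f ∉ φ (YY E X n b) := by
    intro n k hk hnk f hf b hb hbne hcon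
    apply (hW k f hk hf).2
    have h1 : YY E X n b ⊆ YY E X k (E k \ {f}) :=
      (YY_subset_LL hnk hb).trans Set.subset_union_left
    exact hφmono (hYmem hb hbne) (hYmem Set.diff_subset (hdiffne hk hf)) h1 hcon
  have hWinj : ∀ {n : ℕ}, N ≤ n → Set.InjOn (W n) (E n) := by
    intro n hn e he f hf hef
    by_contra hne'
    have h1 : W n e ∈ φ (YY E X n (E n \ {f})) :=
      hWin hn he Set.diff_subset ⟨he, by simpa using hne'⟩
    rw [hef] at h1
    exact (hW n f hn hf).2 h1
  -- the new spread
  refine ⟨fun j => W (j + N) '' E (j + N), ⟨?_, ?_, ?_, ?_⟩, ?_⟩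
  · exact fun j => (hfinE (j + N)).image _
  · exact fun j => (hEne (j + N)).image _
  · intro j k hjk
    rw [Set.disjoint_left]
    rintro ω ⟨e, he, rfl⟩ ⟨f, hf, hWf⟩
    rcases lt_or_gt_of_ne hjk with hlt | hlt
    · have h1 : W (j + N) e ∈ φ (YY E X (k + N) (E (k + N) \ {f})) :=
        hWup (Nat.le_add_left N j) (by omega) he Set.diff_subset
          (hdiffne (Nat.le_add_left N k) hf)
      rw [← hWf] at h1
      exact (hW (k + N) f (Nat.le_add_left N k) hf).2 h1
    · have h1 : W (k + N) f ∈ φ (YY E X (j + N) (E (j + N) \ {e})) :=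
        hWup (Nat.le_add_left N k) (by omega) hf Set.diff_subset
          (hdiffne (Nat.le_add_left N j) he)
      rw [hWf] at h1
      exact (hW (j + N) e (Nat.le_add_left N j) he).2 h1
  · have h1 : ∀ j, (W (j + N) '' E (j + N)).ncard = (E (j + N)).ncard :=
      fun j => Set.ncard_image_of_injOn (hWinj (Nat.le_add_left N j))
    exact Filter.Tendsto.congr (fun j => (h1 j).symm)
      (htend.comp (Filter.tendsto_add_atTop_nat N))
  · rintro x' ⟨j, a', ha', hane', rfl⟩
    have hnN : N ≤ j + N := Nat.le_add_left N j
    set a : Set Ω := {e ∈ E (j + N) | W (j + N) e ∈ a'} with ha_def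
    have haE : a ⊆ E (j + N) := fun e he => he.1
    have himg : W (j + N) '' a = a' := by
      apply Set.Subset.antisymm
      · rintro ω ⟨e, he, rfl⟩
        exact he.2
      · intro ω hω
        obtain ⟨e, he, rfl⟩ := ha' hω
        exact ⟨e, ⟨he, hω⟩, rfl⟩
    have hane : a.Nonempty := by
      obtain ⟨ω, hω⟩ := hane'
      obtain ⟨e, he, rfl⟩ := ha' hω
      exact ⟨e, he, hω⟩
    refine ⟨φ (YY E X (j + N) a), hφS (hYmem haE hane), ?_⟩
    show φ (YY E X (j + N) a) ∩ sjoin _ = _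
    ext ω
    simp only [Set.mem_inter_iff, Set.mem_union, sjoin, Set.mem_iUnion]
    constructor
    · rintro ⟨hz, k, hk⟩
      obtain ⟨f, hf, rfl⟩ := hk
      rcases lt_trichotomy k j with hlt | hlt | hlt
      · exact Or.inl ⟨k, hlt, f, hf, rfl⟩
      · subst hlt
        right
        have hfa : f ∈ a := by
          by_contra hfa
          exact hWout hnN hf haE hfa hane hz
        rw [← himg]
        exact ⟨f, hfa, rfl⟩
      · exact absurd hz (hWdown (Nat.le_add_left N k) (by omega) hf haE hane)
    · rintro (hω | hω)
      · obtain ⟨k, hk, f, hf, rfl⟩ := hω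
        exact ⟨hWup (Nat.le_add_left N k) (by omega) hf haE hane, k, f, hf, rfl⟩
      · rw [← himg] at hω
        obtain ⟨e, he, rfl⟩ := hω
        exact ⟨hWin hnN (haE he) haE he, j, e, haE he, rfl⟩
end
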